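/- arXiv:1210.2081 — 6 statements merged into one kernel-verified Lean document; each statement's English description precedes it below -/
import Mathlib

section
/- For every integer m ≥ 2, every n ∈ ℕ, and all complex numbers z₁, …, z_m with z = z₁ + ⋯ + z_m, the following identity holds: ∑_{k₁+⋯+k_m = n} ∏_{i=1}^{m} C(2kᵢ, kᵢ) q_{kᵢ}(zᵢ) = ∑_{k=0}^{n} C(2k, k) · 2^{2n-2k} · ((m-1)/2)_{n-k} / (n-k)! · q_k(z), where the sum on the left is over all m-tuples (k₁, …, k_m) of nonnegative integers summing to n. -/
/-- The Bessel polynomial `q_n(z) = ∑_{l=0}^n [C(n,l)/C(2n,l)] (2z)^l / l!`. -/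
noncomputable def besselQ (n : ℕ) (z : ℂ) : ℂ :=
  ∑ l ∈ Finset.range (n + 1),
    ((n.choose l : ℂ) / ((2 * n).choose l : ℂ)) * (2 * z) ^ l / (Nat.factorial l : ℂ)

/-- The Pochhammer symbol (rising factorial) `(a)_j = a (a+1) ⋯ (a+j-1)`. -/
noncomputable def poch (a : ℂ) (j : ℕ) : ℂ := ∏ i ∈ Finset.range j, (a + i)

open Finset

noncomputable def cc (i p : ℕ) : ℂ := if p ≤ i then ((2*i - p).choose i : ℂ) else 0

noncomputable def aa (z : ℂ) (n : ℕ) : ℂ := ((2*n).choose n : ℂ) * besselQ n z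

lemma fact_ne (k : ℕ) : (k.factorial : ℂ) ≠ 0 := by
  exact_mod_cast Nat.cast_ne_zero.mpr (Nat.factorial_ne_zero k)

lemma key1 (p i : ℕ) (h : p ≤ i) :
    ((2*i).choose i : ℂ) * ((i.choose p : ℂ) / ((2*i).choose p : ℂ)) = ((2*i - p).choose i : ℂ) := by
  have h1 : i ≤ 2*i := by omega
  have h2 : p ≤ 2*i := by omega
  have h3 : i ≤ 2*i - p := by omega
  rw [Nat.cast_choose ℂ h1, Nat.cast_choose ℂ h, Nat.cast_choose ℂ h2, Nat.cast_choose ℂ h3]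
  have e1 : 2*i - i = i := by omega
  have e2 : 2*i - p - i = i - p := by omega
  rw [e1, e2]
  have n1 := fact_ne i
  have n2 := fact_ne p
  have n3 := fact_ne (i - p)
  have n4 := fact_ne (2*i)
  have n5 := fact_ne (2*i - p)
  field_simp

lemma aa_eq (z : ℂ) (i : ℕ) :
    aa z i = ∑ p ∈ range (i+1), cc i p * (2*z)^p / (p.factorial : ℂ) := by
  unfold aa besselQ
  rw [Finset.mul_sum]
  refine Finset.sum_congr rfl fun p hp => ?_
  have hpi : p ≤ i := Nat.lt_succ_iff.mp (Finset.mem_range.mp hp)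
  rw [cc, if_pos hpi, ← key1 p i hpi]
  ring

lemma aa_eq' (z : ℂ) {i N : ℕ} (h : i ≤ N) :
    aa z i = ∑ p ∈ range (N+1), cc i p * (2*z)^p / (p.factorial : ℂ) := by
  rw [aa_eq]
  refine Finset.sum_subset (by intro x hx; simp at hx ⊢; omega) fun p hp hnp => ?_
  have : ¬ p ≤ i := by simp at hp hnp; omega
  rw [cc, if_neg this, zero_mul, zero_div]

lemma exp_add (u v : ℂ) (l : ℕ) :
    (u+v)^l / (l.factorial : ℂ) = ∑ p ∈ range (l+1), (u^p/(p.factorial : ℂ)) * (v^(l-p)/(((l-p).factorial : ℂ))) := by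
  rw [add_pow, Finset.sum_div]
  refine Finset.sum_congr rfl fun p hp => ?_
  have hpl : p ≤ l := Nat.lt_succ_iff.mp (Finset.mem_range.mp hp)
  rw [Nat.cast_choose ℂ hpl]
  have n1 := fact_ne l
  have n2 := fact_ne p
  have n3 := fact_ne (l - p)
  field_simp

lemma tri {M : Type*} [AddCommMonoid M] (N : ℕ) (F : ℕ → ℕ → M) :
    ∑ l ∈ range (N+1), ∑ p ∈ range (l+1), F p (l - p)
      = ∑ p ∈ range (N+1), ∑ q ∈ range (N+1-p), F p q := by
  induction N with
  | zero => simp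
  | succ N ih =>
    rw [Finset.sum_range_succ, ih]
    have hR : ∑ p ∈ range (N+2), ∑ q ∈ range (N+2-p), F p q
        = (∑ p ∈ range (N+1), ∑ q ∈ range (N+1-p), F p q)
          + ∑ p ∈ range (N+2), F p (N+1-p) := by
      rw [Finset.sum_range_succ (fun p => ∑ q ∈ range (N+2-p), F p q) (N+1),
          Finset.sum_range_succ (fun p => F p (N+1-p)) (N+1)]
      have : ∀ p ∈ range (N+1), ∑ q ∈ range (N+2-p), F p q
          = (∑ q ∈ range (N+1-p), F p q) + F p (N+1-p) := by
        intro p hp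
        have hp' : p ≤ N := Nat.lt_succ_iff.mp (Finset.mem_range.mp hp)
        have e : N+2-p = (N+1-p)+1 := by omega
        rw [e, Finset.sum_range_succ]
      rw [Finset.sum_congr rfl this, Finset.sum_add_distrib]
      have e2 : N+2-(N+1) = 1 := by omega
      rw [e2, Finset.sum_range_one]
      have e3 : N+1-(N+1) = 0 := by omega
      rw [e3]
      abel
    rw [hR]


def Sfun (p q n : ℕ) : ℕ :=
  ∑ i ∈ range (n+1), Nat.choose (2*i+p) i * Nat.choose (2*(n-i)+q) (n-i)

lemma Sfun_symm (p q n : ℕ) : Sfun p q n = Sfun q p n := by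
  unfold Sfun
  rw [← Finset.sum_range_reflect]
  refine Finset.sum_congr rfl fun i hi => ?_
  have hi' : i ≤ n := Nat.lt_succ_iff.mp (Finset.mem_range.mp hi)
  have h1 : n + 1 - 1 - i = n - i := by omega
  have h2 : n - (n - i) = i := by omega
  rw [h1, h2, mul_comm]

lemma Sfun_sub1 (p q n : ℕ) :
    Sfun (p+1) q (n+1) = Sfun (p+2) q n + Sfun p q (n+1) := by
  unfold Sfun
  rw [Finset.sum_range_succ' (fun i => Nat.choose (2*i+(p+1)) i * Nat.choose (2*(n+1-i)+q) (n+1-i)) (n+1)]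
  have hsplit : ∀ i ∈ range (n+1),
      Nat.choose (2*(i+1)+(p+1)) (i+1) * Nat.choose (2*(n+1-(i+1))+q) (n+1-(i+1))
        = Nat.choose (2*i+(p+2)) i * Nat.choose (2*(n-i)+q) (n-i)
          + Nat.choose (2*(i+1)+p) (i+1) * Nat.choose (2*(n+1-(i+1))+q) (n+1-(i+1)) := by
    intro i hi
    have h1 : n + 1 - (i+1) = n - i := by omega
    have h2 : 2*(i+1)+(p+1) = (2*i+(p+2)) + 1 := by omega
    have h3 : 2*(i+1)+p = 2*i+(p+2) := by omega
    rw [h1, h2, h3, Nat.choose_succ_succ' (2*i+(p+2)) i]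
    ring
  rw [Finset.sum_congr rfl hsplit, Finset.sum_add_distrib]
  have hlast : (∑ i ∈ range (n+1),
      Nat.choose (2*(i+1)+p) (i+1) * Nat.choose (2*(n+1-(i+1))+q) (n+1-(i+1)))
      + Nat.choose (2*0+(p+1)) 0 * Nat.choose (2*(n+1-0)+q) (n+1-0)
      = ∑ i ∈ range (n+1+1), Nat.choose (2*i+p) i * Nat.choose (2*(n+1-i)+q) (n+1-i) := by
    rw [Finset.sum_range_succ' (fun i => Nat.choose (2*i+p) i * Nat.choose (2*(n+1-i)+q) (n+1-i)) (n+1)]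
    simp [Nat.choose_zero_right]
  omega
lemma Sfun_B : ∀ n p q, Sfun (p+1) q n = Sfun p (q+1) n := by
  intro n
  induction n with
  | zero => intro p q; simp [Sfun]
  | succ n ih =>
    intro p q
    have e1 := Sfun_sub1 p q n
    have e2 := Sfun_sub1 q p n
    have e3 : Sfun (q+1) p (n+1) = Sfun p (q+1) (n+1) := Sfun_symm _ _ _
    have e4 : Sfun (q+2) p n = Sfun p (q+2) n := Sfun_symm _ _ _
    have e5 : Sfun q p (n+1) = Sfun p q (n+1) := Sfun_symm _ _ _
    have h : Sfun (p+2) q n = Sfun p (q+2) n := by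
      rw [show p+2 = (p+1)+1 by rfl, ih (p+1) q, ih p (q+1)]
    omega

lemma Sfun_A (p q n : ℕ) : Sfun p q n = Sfun 0 (p+q) n := by
  induction p generalizing q with
  | zero => simp
  | succ p ih => rw [Sfun_B, ih (q+1)]; congr 1; omega

lemma dagger (n p q : ℕ) :
    ∑ i ∈ range (n+1), cc i p * cc (n-i) q
      = ∑ j ∈ range (n+1), ((2*j).choose j : ℂ) * cc (n-j) (p+q) := by
  by_cases hpq : p + q ≤ n
  · set M := n - p - q with hM
    -- LHS
    have hL : ∑ i ∈ range (n+1), cc i p * cc (n-i) q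
        = ((Sfun p q M : ℕ) : ℂ) := by
      rw [← Finset.sum_subset (show Ico p (n-q+1) ⊆ range (n+1) by
            intro x hx; simp at hx ⊢; omega)
          (fun i hi hni => ?_)]
      · rw [Finset.sum_Ico_eq_sum_range]
        have e : n - q + 1 - p = M + 1 := by omega
        rw [e]
        unfold Sfun
        push_cast
        refine Finset.sum_congr rfl fun i hi => ?_
        have hiM : i ≤ M := Nat.lt_succ_iff.mp (Finset.mem_range.mp hi)
        have c1 : cc (p+i) p = ((2*i+p).choose i : ℂ) := by
          rw [cc, if_pos (by omega)]
          congr 1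
          have e1 : 2*(p+i) - p = 2*i+p := by omega
          rw [e1, ← Nat.choose_symm (show p+i ≤ 2*i+p by omega)]
          congr 1
          omega
        have c2 : cc (n-(p+i)) q = ((2*(M-i)+q).choose (M-i) : ℂ) := by
          rw [cc, if_pos (by omega)]
          congr 1
          have e1 : 2*(n-(p+i)) - q = 2*(M-i)+q := by omega
          have e2 : n-(p+i) = (M-i)+q := by omega
          rw [e1, e2, ← Nat.choose_symm (show (M-i)+q ≤ 2*(M-i)+q by omega)]
          congr 1
          omega
        rw [c1, c2]
      · have hcase : i < p ∨ n - q + 1 ≤ i := by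
          simp at hi hni; omega
        rcases hcase with hc | hc
        · rw [cc, if_neg (by omega), zero_mul]
        · have : ¬ q ≤ n - i := by simp at hi; omega
          simp only [cc]
          rw [if_neg this, mul_zero]
    have hR : ∑ j ∈ range (n+1), ((2*j).choose j : ℂ) * cc (n-j) (p+q)
        = ((Sfun 0 (p+q) M : ℕ) : ℂ) := by
      rw [← Finset.sum_subset (show range (M+1) ⊆ range (n+1) by
            intro x hx; simp at hx ⊢; omega)
          (fun j hj hnj => ?_)]
      · unfold Sfun
        push_cast
        refine Finset.sum_congr rfl fun j hj => ?_
        have hjM : j ≤ M := Nat.lt_succ_iff.mp (Finset.mem_range.mp hj)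
        have c2 : cc (n-j) (p+q) = ((2*(M-j)+(p+q)).choose (M-j) : ℂ) := by
          rw [cc, if_pos (by omega)]
          congr 1
          have e1 : 2*(n-j) - (p+q) = 2*(M-j)+(p+q) := by omega
          have e2 : n-j = (M-j)+(p+q) := by omega
          rw [e1, e2, ← Nat.choose_symm (show (M-j)+(p+q) ≤ 2*(M-j)+(p+q) by omega)]
          congr 1
          omega
        rw [c2]
        norm_num
      · have : ¬ p + q ≤ n - j := by simp at hj hnj; omega
        rw [cc, if_neg this, mul_zero]
    rw [hL, hR, Sfun_A p q M]
  · rw [Finset.sum_eq_zero, Finset.sum_eq_zero]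
    · intro j hj
      have : ¬ p + q ≤ n - j := by omega
      rw [cc, if_neg this, mul_zero]
    · intro i hi
      have hi' : i ≤ n := Nat.lt_succ_iff.mp (Finset.mem_range.mp hi)
      by_cases hp : p ≤ i
      · have : ¬ q ≤ n - i := by omega
        simp only [cc]
        rw [if_neg this, mul_zero]
      · rw [cc, if_neg hp, zero_mul]

lemma step1 (x y : ℂ) (n : ℕ) :
    ∑ ij ∈ Finset.HasAntidiagonal.antidiagonal n, aa x ij.1 * aa y ij.2
      = ∑ ij ∈ Finset.HasAntidiagonal.antidiagonal n, ((2*ij.1).choose ij.1 : ℂ) * aa (x+y) ij.2 := by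
  rw [Finset.Nat.sum_antidiagonal_eq_sum_range_succ_mk,
      Finset.Nat.sum_antidiagonal_eq_sum_range_succ_mk]
  have hL : ∀ i ∈ range (n+1), aa x i * aa y (n-i)
      = ∑ p ∈ range (n+1), ∑ q ∈ range (n+1),
          (cc i p * (2*x)^p / (p.factorial:ℂ)) * (cc (n-i) q * (2*y)^q / (q.factorial:ℂ)) := by
    intro i hi
    have hi' : i ≤ n := Nat.lt_succ_iff.mp (Finset.mem_range.mp hi)
    rw [aa_eq' x hi', aa_eq' y (show n - i ≤ n by omega), Finset.sum_mul_sum]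
  rw [Finset.sum_congr rfl hL, Finset.sum_comm]
  have hswap : ∀ p ∈ range (n+1),
      ∑ i ∈ range (n+1), ∑ q ∈ range (n+1),
          (cc i p * (2*x)^p / (p.factorial:ℂ)) * (cc (n-i) q * (2*y)^q / (q.factorial:ℂ))
      = ∑ q ∈ range (n+1), ((2*x)^p / (p.factorial:ℂ) * ((2*y)^q / (q.factorial:ℂ)))
          * ∑ i ∈ range (n+1), cc i p * cc (n-i) q := by
    intro p hp
    rw [Finset.sum_comm]
    refine Finset.sum_congr rfl fun q hq => ?_
    rw [Finset.mul_sum]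
    refine Finset.sum_congr rfl fun i hi => ?_
    ring
  rw [Finset.sum_congr rfl hswap]
  have hR : ∀ j ∈ range (n+1), ((2*j).choose j : ℂ) * aa (x+y) (n-j)
      = ∑ p ∈ range (n+1), ∑ q ∈ range (n+1),
          ((2*x)^p / (p.factorial:ℂ) * ((2*y)^q / (q.factorial:ℂ)))
            * (((2*j).choose j : ℂ) * cc (n-j) (p+q)) := by
    intro j hj
    have hj' : j ≤ n := Nat.lt_succ_iff.mp (Finset.mem_range.mp hj)
    rw [aa_eq' (x+y) (show n-j ≤ n by omega)]
    have e1 : ∀ l ∈ range (n+1), cc (n-j) l * (2*(x+y))^l / (l.factorial:ℂ)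
        = ∑ p ∈ range (l+1), cc (n-j) (p + (l-p)) * ((2*x)^p/(p.factorial:ℂ))
            * ((2*y)^(l-p)/((l-p).factorial:ℂ)) := by
      intro l hl
      rw [show (2*(x+y)) = 2*x + 2*y by ring, mul_div_assoc, exp_add, Finset.mul_sum]
      refine Finset.sum_congr rfl fun p hp => ?_
      have hpl : p + (l - p) = l := by
        have := Nat.lt_succ_iff.mp (Finset.mem_range.mp hp); omega
      rw [hpl]
      ring
    rw [Finset.sum_congr rfl e1,
        tri n (fun p q => cc (n-j) (p+q) * ((2*x)^p/(p.factorial:ℂ))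
          * ((2*y)^q/(q.factorial:ℂ))), Finset.mul_sum]
    refine Finset.sum_congr rfl fun p hp => ?_
    rw [Finset.mul_sum,
        Finset.sum_subset (show range (n+1-p) ⊆ range (n+1) by intro x hx; simp at hx ⊢; omega)
          (fun q hq hnq => ?_)]
    · refine Finset.sum_congr rfl fun q hq => ?_
      ring
    · have : ¬ p + q ≤ n - j := by simp at hq hnq; omega
      simp only [cc]
      rw [if_neg this, zero_mul, zero_mul, mul_zero]
  rw [Finset.sum_congr rfl hR]
  conv_rhs => rw [Finset.sum_comm]
  refine Finset.sum_congr rfl fun p hp => ?_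
  conv_rhs => rw [Finset.sum_comm]
  refine Finset.sum_congr rfl fun q hq => ?_
  conv_rhs => rw [← Finset.mul_sum]
  rw [dagger]

lemma poch_succ (a : ℂ) (j : ℕ) : poch a (j+1) = poch a j * (a + j) :=
  Finset.prod_range_succ _ _

lemma poch_vdm (a b : ℂ) : ∀ n : ℕ, poch (a+b) n
    = ∑ ij ∈ Finset.HasAntidiagonal.antidiagonal n, ((n.choose ij.1 : ℂ)) * (poch a ij.1 * poch b ij.2) := by
  intro n
  induction n with
  | zero => simp [poch]
  | succ n ih =>
    rw [poch_succ, ih,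
      Finset.sum_antidiagonal_choose_succ_mul (fun i j => poch a i * poch b j) n,
      Finset.sum_mul]
    rw [← Finset.sum_add_distrib]
    refine Finset.sum_congr rfl fun ij hij => ?_
    have hsum : ij.1 + ij.2 = n := Finset.HasAntidiagonal.mem_antidiagonal.mp hij
    have hc : (n.choose ij.2 : ℂ) = (n.choose ij.1 : ℂ) := by
      rw [Nat.choose_symm_of_eq_add hsum.symm]
    rw [hc, poch_succ, poch_succ]
    have hcast : (a + b + n) = (a + ij.1) + (b + ij.2) := by
      have h : ((n : ℂ)) = (ij.1 : ℂ) + (ij.2 : ℂ) := by exact_mod_cast hsum.symm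
      linear_combination h
    rw [hcast]
    ring

lemma four_poch_half (j : ℕ) : (4:ℂ)^j * poch (1/2) j * (j.factorial : ℂ)
    = (((2*j).factorial : ℕ) : ℂ) := by
  induction j with
  | zero => simp [poch]
  | succ j ih =>
    rw [poch_succ]
    have e : 2*(j+1) = (2*j+1)+1 := by ring
    rw [e, Nat.factorial_succ, Nat.factorial_succ, Nat.factorial_succ]
    push_cast
    linear_combination ((4:ℂ)*((1:ℂ)/2 + j) * ((j:ℂ)+1)) * ih

lemma Bhalf (j : ℕ) : (4:ℂ)^j * poch (1/2) j / (j.factorial : ℂ) = ((2*j).choose j : ℂ) := by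
  have h1 : j ≤ 2*j := by omega
  rw [Nat.cast_choose ℂ h1]
  have e : 2*j - j = j := by omega
  rw [e]
  have n1 := fact_ne j
  rw [div_eq_div_iff n1 (mul_ne_zero n1 n1)]
  linear_combination (j.factorial : ℂ) * four_poch_half j

noncomputable def Aps (z : ℂ) : PowerSeries ℂ := PowerSeries.mk (aa z)
noncomputable def Bps (c : ℂ) : PowerSeries ℂ :=
  PowerSeries.mk (fun j => (4:ℂ)^j * poch c j / (j.factorial : ℂ))

lemma Bps_mul (a b : ℂ) : Bps a * Bps b = Bps (a+b) := by
  ext n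
  rw [PowerSeries.coeff_mul]
  simp only [Bps, PowerSeries.coeff_mk]
  rw [poch_vdm, Finset.mul_sum]
  rw [Finset.sum_div]
  refine Finset.sum_congr rfl fun ij hij => ?_
  have hsum : ij.1 + ij.2 = n := Finset.HasAntidiagonal.mem_antidiagonal.mp hij
  have hi : ij.1 ≤ n := by omega
  have hj : n - ij.1 = ij.2 := by omega
  rw [Nat.cast_choose ℂ hi, hj]
  have n1 := fact_ne n
  have n2 := fact_ne ij.1
  have n3 := fact_ne ij.2
  have hpow : (4:ℂ)^n = (4:ℂ)^ij.1 * (4:ℂ)^ij.2 := by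
    rw [← pow_add, hsum]
  rw [hpow]
  field_simp

lemma Bps_zero : Bps 0 = 1 := by
  ext n
  simp only [Bps, PowerSeries.coeff_mk, PowerSeries.coeff_one]
  cases n with
  | zero => simp [poch]
  | succ n =>
    have : poch 0 (n+1) = 0 := by
      refine Finset.prod_eq_zero (Finset.mem_range.mpr (Nat.succ_pos n)) ?_
      norm_num
    rw [this]
    simp

lemma Aps_mul (x y : ℂ) : Aps x * Aps y = Bps (1/2) * Aps (x+y) := by
  ext n
  rw [PowerSeries.coeff_mul, PowerSeries.coeff_mul]
  simp only [Aps, Bps, PowerSeries.coeff_mk]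
  rw [step1]
  refine Finset.sum_congr rfl fun ij hij => ?_
  rw [Bhalf]

lemma mainPS : ∀ (m : ℕ) (zv : Fin (m+1) → ℂ),
    ∏ i, Aps (zv i) = Bps ((m:ℂ)/2) * Aps (∑ i, zv i) := by
  intro m
  induction m with
  | zero =>
    intro zv
    simp only [Nat.cast_zero, zero_div, Bps_zero, one_mul]
    rw [Fin.prod_univ_succ, Fin.prod_univ_zero, mul_one, Fin.sum_univ_succ, Fin.sum_univ_zero,
      add_zero]
  | succ m ih =>
    intro zv
    rw [Fin.prod_univ_succ, ih (fun i => zv i.succ)]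
    rw [← mul_assoc, mul_comm (Aps (zv 0)) (Bps ((m:ℂ)/2)), mul_assoc, Aps_mul, ← mul_assoc,
      Bps_mul]
    rw [show zv 0 + ∑ i : Fin (m+1), zv i.succ = ∑ i : Fin (m+1+1), zv i from
      (Fin.sum_univ_succ zv).symm]
    congr 2
    push_cast
    ring

lemma coeff_prod_tuple (m n : ℕ) (f : Fin m → PowerSeries ℂ) :
    (PowerSeries.coeff n) (∏ i, f i)
      = ∑ k ∈ Finset.Nat.antidiagonalTuple m n, ∏ i, (PowerSeries.coeff (k i)) (f i) := by
  rw [PowerSeries.coeff_prod]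
  refine Finset.sum_nbij' (fun l => (l : Fin m → ℕ)) (fun k => Finsupp.equivFunOnFinite.symm k)
    ?_ ?_ ?_ ?_ ?_
  · intro l hl
    rw [Finset.mem_finsuppAntidiag] at hl
    rw [Finset.Nat.mem_antidiagonalTuple]
    exact hl.1
  · intro k hk
    rw [Finset.Nat.mem_antidiagonalTuple] at hk
    rw [Finset.mem_finsuppAntidiag]
    constructor
    · simpa using hk
    · exact Finset.subset_univ _
  · intro l hl
    exact Finsupp.equivFunOnFinite.symm_apply_apply l
  · intro k hk
    rfl
  · intro l hl
    rfl

theorem stmt_0 (m : ℕ) (hm : 2 ≤ m) (n : ℕ) (zv : Fin m → ℂ) :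
    ∑ k ∈ Finset.Nat.antidiagonalTuple m n,
      ∏ i, (((2 * k i).choose (k i) : ℂ) * besselQ (k i) (zv i)) =
    ∑ k ∈ Finset.range (n + 1),
      ((2 * k).choose k : ℂ) * 2 ^ (2 * n - 2 * k) * poch (((m : ℂ) - 1) / 2) (n - k)
        / (Nat.factorial (n - k) : ℂ) * besselQ k (∑ i, zv i) := by
  obtain ⟨m', rfl⟩ : ∃ m', m = m' + 1 := ⟨m - 1, by omega⟩
  have h := congrArg (PowerSeries.coeff n) (mainPS m' zv)
  rw [coeff_prod_tuple, PowerSeries.coeff_mul] at h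
  simp only [Aps, Bps, PowerSeries.coeff_mk, aa] at h
  rw [h]
  rw [← Finset.Nat.sum_antidiagonal_swap, Finset.Nat.sum_antidiagonal_eq_sum_range_succ_mk]
  refine Finset.sum_congr rfl fun k hk => ?_
  simp only [Prod.swap_prod_mk]
  have hk' : k ≤ n := Nat.lt_succ_iff.mp (Finset.mem_range.mp hk)
  have hc : ((↑(m'+1):ℂ) - 1)/2 = (m':ℂ)/2 := by push_cast; ring
  have hpow : (2:ℂ)^(2*n-2*k) = 4^(n-k) := by
    rw [show 2*n-2*k = 2*(n-k) by omega, pow_mul]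
    norm_num
  rw [hc, hpow]
  ring
end

section
/- For every integer m ≥ 2, every n ∈ ℕ, and every complex number z, the following identity holds: ∑_{k₁+⋯+k_m = n} ∏_{i=1}^{m} C(2kᵢ, kᵢ) q_{kᵢ}(z) = ∑_{k=0}^{n} C(2k, k) · 2^{2n-2k} · ((m-1)/2)_{n-k} / (n-k)! · q_k(mz), where the sum on the left is over all m-tuples (k₁, …, k_m) of nonnegative integers summing to n. -/
open PowerSeries Finset

namespace BesselGF

noncomputable def CC : ℂ⟦X⟧ := PowerSeries.mk fun n => (catalan n : ℂ)
noncomputable def c0 : ℂ⟦X⟧ := PowerSeries.mk fun n => ((2 * n).choose n : ℂ)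
noncomputable def cP (l : ℕ) : ℂ⟦X⟧ :=
  PowerSeries.mk fun n => if l ≤ n then ((2 * n - l).choose n : ℂ) else 0

lemma CC_eq : CC = 1 + X * CC ^ 2 := by
  ext n
  rcases n with _ | n
  · simp [CC, coeff_zero_eq_constantCoeff]
  · rw [map_add, coeff_one, if_neg (Nat.succ_ne_zero n), sq, coeff_succ_X_mul, coeff_mul]
    simp only [CC, coeff_mk]
    rw [catalan_succ']
    push_cast
    ring

lemma c0_eq_deriv : d⁄dX ℂ (X * CC) = c0 := by
  ext n
  rw [coeff_derivative, coeff_succ_X_mul]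
  simp only [CC, c0, coeff_mk]
  have h := succ_mul_catalan_eq_centralBinom n
  rw [Nat.centralBinom] at h
  exact_mod_cast by rw [← h]; push_cast; ring

lemma u_c0 : (1 - 2 * X * CC) * c0 = 1 := by
  have h1 := CC_eq
  have h2 : (d⁄dX ℂ) CC = CC ^ 2 + 2 * X * CC * ((d⁄dX ℂ) CC) := by
    conv_lhs => rw [h1]
    rw [map_add, Derivation.leibniz, Derivation.leibniz_pow, derivative_X]
    simp only [Derivation.map_one_eq_zero, smul_eq_mul, nsmul_eq_mul, Nat.cast_ofNat]
    ring
  have h3 : (d⁄dX ℂ) (X * CC) = X * ((d⁄dX ℂ) CC) + CC := by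
    rw [Derivation.leibniz, derivative_X]
    simp only [smul_eq_mul]
    ring
  rw [← c0_eq_deriv, h3]
  linear_combination X * h2 + h1

lemma cP_zero : cP 0 = c0 := by
  ext n; simp [cP, c0]
lemma two_cP_one : 2 * cP 1 = c0 - 1 := by
  have h2 : (2 : ℂ⟦X⟧) = PowerSeries.C 2 := by
    rw [map_ofNat]
  ext n
  rw [h2, coeff_C_mul, map_sub, coeff_one]
  rcases n with _ | n
  · simp [cP, c0]
  · simp only [cP, c0, coeff_mk, if_pos (show 1 ≤ n + 1 by omega),
      if_neg (Nat.succ_ne_zero n)]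
    have e1 : 2 * (n + 1) - 1 = 2 * n + 1 := by omega
    have e2 : 2 * (n + 1) = (2 * n + 1) + 1 := by omega
    have key : ((2 * n + 1) + 1).choose (n + 1) = 2 * ((2 * n + 1).choose (n + 1)) := by
      rw [Nat.choose_succ_succ (2 * n + 1) n, ← Nat.choose_symm_half]
      ring
    rw [e1, e2, key]
    push_cast
    ring

lemma cP_one : cP 1 = X * CC * c0 := by
  have h2ne : (2 : ℂ⟦X⟧) ≠ 0 := by
    intro hc
    have := congrArg (PowerSeries.constantCoeff) hc
    rw [map_ofNat] at this; norm_num at this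
  apply mul_left_cancel₀ h2ne
  rw [two_cP_one]
  linear_combination u_c0

lemma pascal (l : ℕ) : cP (l + 1) = cP (l + 2) + X * cP l := by
  ext n
  rw [map_add]
  rcases n with _ | n
  · simp [cP, coeff_zero_eq_constantCoeff]
  · rw [coeff_succ_X_mul]
    simp only [cP, coeff_mk]
    by_cases hl : l ≤ n
    · rw [if_pos (by omega : l + 1 ≤ n + 1), if_pos hl]
      have e1 : 2 * (n + 1) - (l + 1) = (2 * n - l) + 1 := by omega
      rw [e1]
      by_cases hl2 : l + 2 ≤ n + 1
      · rw [if_pos hl2]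
        have e2 : 2 * (n + 1) - (l + 2) = 2 * n - l := by omega
        rw [e2, Nat.choose_succ_succ]
        push_cast; ring
      · have hln : l = n := by omega
        rw [if_neg hl2]; subst hln
        have e3 : 2 * l - l = l := by omega
        rw [e3]
        simp [Nat.choose_self]
    · rw [if_neg (by omega), if_neg (by omega), if_neg hl]
      simp

lemma cP_eq : ∀ l, cP l = c0 * (X * CC) ^ l
  | 0 => by simpa using cP_zero
  | 1 => by rw [pow_one, cP_one]; ring
  | (l + 2) => by
      have ha := pascal l
      have h1 := cP_eq l
      have h2 := cP_eq (l + 1)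
      have hC := CC_eq
      linear_combination (-1) * ha + h2 - X * h1 + c0 * (X * CC) ^ l * X * hC

lemma coeff_XCCpow_eq_zero {i l : ℕ} (h : i < l) : (coeff i) ((X * CC) ^ l) = 0 := by
  rw [mul_pow, coeff_mul]
  apply Finset.sum_eq_zero
  rintro ⟨a, b⟩ hab
  rw [Finset.HasAntidiagonal.mem_antidiagonal] at hab
  rw [coeff_X_pow, if_neg (by omega), zero_mul]
noncomputable def Ee (z : ℂ) : ℂ⟦X⟧ :=
  PowerSeries.mk fun n =>
    ∑ l ∈ Finset.range (n + 1), (2 * z) ^ l / (Nat.factorial l : ℂ) * (coeff n) ((X * CC) ^ l)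

noncomputable def Fz (z : ℂ) : ℂ⟦X⟧ :=
  PowerSeries.mk fun n => ((2 * n).choose n : ℂ) * besselQ n z

lemma coeff_Ee_eq (z : ℂ) {i n : ℕ} (h : i ≤ n) :
    (coeff i) (Ee z) =
      ∑ l ∈ Finset.range (n + 1), (2 * z) ^ l / (Nat.factorial l : ℂ) * (coeff i) ((X * CC) ^ l) := by
  rw [Ee, coeff_mk]
  apply Finset.sum_subset
  · intro l hl
    simp only [Finset.mem_range] at *
    omega
  · intro l hl1 hl2
    simp only [Finset.mem_range] at *
    rw [coeff_XCCpow_eq_zero (by omega), mul_zero]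

lemma besselGlue (n : ℕ) (z : ℂ) :
    ((2 * n).choose n : ℂ) * besselQ n z =
      ∑ l ∈ Finset.range (n + 1), (2 * z) ^ l / (Nat.factorial l : ℂ) * ((2 * n - l).choose n : ℂ) := by
  rw [besselQ, Finset.mul_sum]
  apply Finset.sum_congr rfl
  intro l hl
  have hl' : l ≤ n := by simp only [Finset.mem_range] at hl; omega
  have hnz : ((2 * n).choose l : ℂ) ≠ 0 :=
    Nat.cast_ne_zero.2 (Nat.choose_pos (by omega)).ne'
  have hfac : ((Nat.factorial l : ℂ)) ≠ 0 := Nat.cast_ne_zero.2 (Nat.factorial_ne_zero l)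
  have key : (2 * n).choose n * n.choose l = (2 * n).choose l * ((2 * n - l).choose n) := by
    rw [Nat.choose_mul hl']
    congr 1
    have e : 2 * n - l - n = n - l := by omega
    rw [← e, Nat.choose_symm (by omega)]
  have keyC : ((2 * n).choose n : ℂ) * (n.choose l : ℂ) =
      ((2 * n).choose l : ℂ) * ((2 * n - l).choose n : ℂ) := by exact_mod_cast key
  field_simp
  linear_combination (2 ^ l * z ^ l) * keyC

lemma Fz_eq (z : ℂ) : Fz z = c0 * Ee z := by
  ext n
  rw [coeff_mul]
  have step1 : ∀ p ∈ antidiagonal n,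
      (coeff p.1) c0 * (coeff p.2) (Ee z) =
      ∑ l ∈ Finset.range (n + 1),
        (2 * z) ^ l / (Nat.factorial l : ℂ) * ((coeff p.1) c0 * (coeff p.2) ((X * CC) ^ l)) := by
    intro p hp
    rw [Finset.HasAntidiagonal.mem_antidiagonal] at hp
    rw [coeff_Ee_eq z (show p.2 ≤ n by omega), Finset.mul_sum]
    apply Finset.sum_congr rfl
    intro l _
    ring
  rw [Finset.sum_congr rfl step1, Finset.sum_comm]
  have step2 : ∀ l ∈ Finset.range (n + 1),
      (∑ p ∈ antidiagonal n,
        (2 * z) ^ l / (Nat.factorial l : ℂ) * ((coeff p.1) c0 * (coeff p.2) ((X * CC) ^ l)))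
      = (2 * z) ^ l / (Nat.factorial l : ℂ) * ((2 * n - l).choose n : ℂ) := by
    intro l hl
    rw [← Finset.mul_sum, ← coeff_mul, ← cP_eq l]
    simp only [cP, coeff_mk, if_pos (show l ≤ n by simp only [Finset.mem_range] at hl; omega)]
  rw [Finset.sum_congr rfl step2, Fz, coeff_mk, besselGlue]

lemma triangle_sum (n : ℕ) (F : ℕ → ℕ → ℂ) (hF : ∀ l k, n < l + k → F l k = 0) :
    ∑ L ∈ Finset.range (n + 1), ∑ p ∈ antidiagonal L, F p.1 p.2 =
      ∑ l ∈ Finset.range (n + 1), ∑ k ∈ Finset.range (n + 1), F l k := by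
  classical
  have hdisj : (↑(Finset.range (n + 1)) : Set ℕ).PairwiseDisjoint
      (fun L => (antidiagonal L : Finset (ℕ × ℕ))) := by
    intro a _ b _ hab
    simp only [Finset.disjoint_left]
    intro p hpa hpb
    rw [Finset.HasAntidiagonal.mem_antidiagonal] at hpa hpb
    exact hab (by omega)
  rw [← Finset.sum_biUnion hdisj]
  rw [← Finset.sum_product']
  apply Finset.sum_subset
  · intro p hp
    simp only [Finset.mem_biUnion, Finset.mem_range, Finset.HasAntidiagonal.mem_antidiagonal] at hp
    obtain ⟨L, hL, hpL⟩ := hp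
    simp only [Finset.mem_product, Finset.mem_range]
    omega
  · intro p hp1 hp2
    simp only [Finset.mem_biUnion, Finset.mem_range, Finset.HasAntidiagonal.mem_antidiagonal] at hp2
    apply hF
    by_contra hc
    push_neg at hc
    exact hp2 ⟨p.1 + p.2, by omega, rfl⟩
lemma binom_div (z w : ℂ) (L : ℕ) :
    (2 * (z + w)) ^ L / (Nat.factorial L : ℂ) =
      ∑ p ∈ antidiagonal L,
        (2 * z) ^ p.1 / (Nat.factorial p.1 : ℂ) * ((2 * w) ^ p.2 / (Nat.factorial p.2 : ℂ)) := by
  rw [Finset.Nat.sum_antidiagonal_eq_sum_range_succ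
    (f := fun a b => (2 * z) ^ a / (Nat.factorial a : ℂ) * ((2 * w) ^ b / (Nat.factorial b : ℂ)))]
  rw [show (2 * (z + w)) = 2 * z + 2 * w by ring, add_pow, Finset.sum_div]
  apply Finset.sum_congr rfl
  intro l hl
  have hl' : l ≤ L := by simp only [Finset.mem_range] at hl; omega
  rw [Nat.cast_choose ℂ hl']
  have h1 : ((Nat.factorial l : ℂ)) ≠ 0 := Nat.cast_ne_zero.2 (Nat.factorial_ne_zero l)
  have h2 : ((Nat.factorial (L - l) : ℂ)) ≠ 0 := Nat.cast_ne_zero.2 (Nat.factorial_ne_zero _)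
  have h3 : ((Nat.factorial L : ℂ)) ≠ 0 := Nat.cast_ne_zero.2 (Nat.factorial_ne_zero L)
  field_simp

lemma Ee_mul (z w : ℂ) : Ee z * Ee w = Ee (z + w) := by
  ext n
  rw [coeff_mul]
  have step1 : ∀ p ∈ antidiagonal n,
      (coeff p.1) (Ee z) * (coeff p.2) (Ee w) =
      ∑ l ∈ Finset.range (n + 1), ∑ k ∈ Finset.range (n + 1),
        (2 * z) ^ l / (Nat.factorial l : ℂ) * ((2 * w) ^ k / (Nat.factorial k : ℂ)) *
          ((coeff p.1) ((X * CC) ^ l) * (coeff p.2) ((X * CC) ^ k)) := by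
    intro p hp
    rw [Finset.HasAntidiagonal.mem_antidiagonal] at hp
    rw [coeff_Ee_eq z (show p.1 ≤ n by omega), coeff_Ee_eq w (show p.2 ≤ n by omega),
      Finset.sum_mul_sum]
    apply Finset.sum_congr rfl; intro l _
    apply Finset.sum_congr rfl; intro k _
    ring
  rw [Finset.sum_congr rfl step1, Finset.sum_comm]
  have step2 : ∀ l ∈ Finset.range (n + 1),
      (∑ p ∈ antidiagonal n, ∑ k ∈ Finset.range (n + 1),
        (2 * z) ^ l / (Nat.factorial l : ℂ) * ((2 * w) ^ k / (Nat.factorial k : ℂ)) *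
          ((coeff p.1) ((X * CC) ^ l) * (coeff p.2) ((X * CC) ^ k)))
      = ∑ k ∈ Finset.range (n + 1),
          (2 * z) ^ l / (Nat.factorial l : ℂ) * ((2 * w) ^ k / (Nat.factorial k : ℂ)) *
            (coeff n) ((X * CC) ^ (l + k)) := by
    intro l _
    rw [Finset.sum_comm]
    apply Finset.sum_congr rfl
    intro k _
    rw [← Finset.mul_sum, ← coeff_mul, ← pow_add]
  rw [Finset.sum_congr rfl step2]
  -- now compute RHS
  rw [Ee, coeff_mk]
  have step3 : ∀ L ∈ Finset.range (n + 1),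
      (2 * (z + w)) ^ L / (Nat.factorial L : ℂ) * (coeff n) ((X * CC) ^ L) =
      ∑ p ∈ antidiagonal L,
        (2 * z) ^ p.1 / (Nat.factorial p.1 : ℂ) * ((2 * w) ^ p.2 / (Nat.factorial p.2 : ℂ)) *
          (coeff n) ((X * CC) ^ (p.1 + p.2)) := by
    intro L _
    rw [binom_div, Finset.sum_mul]
    apply Finset.sum_congr rfl
    intro p hp
    rw [Finset.HasAntidiagonal.mem_antidiagonal] at hp
    rw [hp]
  rw [Finset.sum_congr rfl step3]
  rw [triangle_sum n (fun l k =>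
      (2 * z) ^ l / (Nat.factorial l : ℂ) * ((2 * w) ^ k / (Nat.factorial k : ℂ)) *
        (coeff n) ((X * CC) ^ (l + k)))
    (fun l k hlk => by
      show (2 * z) ^ l / (Nat.factorial l : ℂ) * ((2 * w) ^ k / (Nat.factorial k : ℂ)) *
        (coeff n) ((X * CC) ^ (l + k)) = 0
      rw [coeff_XCCpow_eq_zero (by omega), mul_zero])]

lemma Fz_mul (z w : ℂ) : Fz z * Fz w = c0 * Fz (z + w) := by
  rw [Fz_eq z, Fz_eq w, Fz_eq (z + w), ← Ee_mul]
  ring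
lemma poch_zero (a : ℂ) : poch a 0 = 1 := by simp [poch]

lemma poch_succ (a : ℂ) (j : ℕ) : poch a (j + 1) = poch a j * (a + j) := by
  rw [poch, Finset.prod_range_succ, poch]

noncomputable def Hs (m : ℕ) : ℂ⟦X⟧ :=
  PowerSeries.mk fun j => 2 ^ (2 * j) * poch (((m : ℂ) - 1) / 2) j / (Nat.factorial j : ℂ)

lemma Hs_one : Hs 1 = 1 := by
  ext j
  rw [Hs, coeff_mk, coeff_one]
  rcases j with _ | j
  · simp [poch_zero]
  · rw [if_neg (Nat.succ_ne_zero j)]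
    have hp : poch ((((1 : ℕ) : ℂ) - 1) / 2) (j + 1) = 0 := by
      rw [poch]
      apply Finset.prod_eq_zero (Finset.mem_range.2 (Nat.succ_pos j))
      push_cast
      norm_num
    rw [hp]
    simp

lemma vand (a b : ℂ) : ∀ j : ℕ,
    ∑ p ∈ antidiagonal j, (j.choose p.1 : ℂ) * (poch a p.1 * poch b p.2) = poch (a + b) j := by
  intro j
  induction j with
  | zero => simp [poch_zero]
  | succ j ih =>
    have expand : ∀ p ∈ antidiagonal j,
        ((((j + 1).choose (p.1 + 1) : ℕ)) : ℂ) * (poch a (p.1 + 1) * poch b p.2)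
        = ((j.choose p.1 : ℂ) * (poch a p.1 * poch b p.2)) * (a + p.1)
          + ((j.choose (p.1 + 1) : ℂ) * (poch a (p.1 + 1) * poch b p.2)) := by
      intro p _
      rw [Nat.choose_succ_succ, poch_succ]
      push_cast
      ring
    calc
      ∑ p ∈ antidiagonal (j + 1), ((j + 1).choose p.1 : ℂ) * (poch a p.1 * poch b p.2)
          = (((j + 1).choose 0 : ℕ) : ℂ) * (poch a 0 * poch b (j + 1)) +
            ∑ p ∈ antidiagonal j,
              (((j + 1).choose (p.1 + 1) : ℕ) : ℂ) * (poch a (p.1 + 1) * poch b p.2) := by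
        rw [Finset.Nat.sum_antidiagonal_succ
          (f := fun p => (((j + 1).choose p.1 : ℕ) : ℂ) * (poch a p.1 * poch b p.2))]
      _ = ((j.choose 0 : ℕ) : ℂ) * (poch a 0 * poch b (j + 1)) +
          (∑ p ∈ antidiagonal j, ((j.choose p.1 : ℂ) * (poch a p.1 * poch b p.2)) * (a + p.1)
            + ∑ p ∈ antidiagonal j,
                ((j.choose (p.1 + 1) : ℕ) : ℂ) * (poch a (p.1 + 1) * poch b p.2)) := by
        rw [Finset.sum_congr rfl expand, Finset.sum_add_distrib]
        simp
      _ = (∑ p ∈ antidiagonal (j + 1), ((j.choose p.1 : ℕ) : ℂ) * (poch a p.1 * poch b p.2))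
          + ∑ p ∈ antidiagonal j, ((j.choose p.1 : ℂ) * (poch a p.1 * poch b p.2)) * (a + p.1) := by
        rw [Finset.Nat.sum_antidiagonal_succ
          (f := fun p => ((j.choose p.1 : ℕ) : ℂ) * (poch a p.1 * poch b p.2))]
        ring
      _ = (∑ p ∈ antidiagonal j, ((j.choose p.1 : ℂ) * (poch a p.1 * poch b p.2)) * (b + p.2))
          + ∑ p ∈ antidiagonal j, ((j.choose p.1 : ℂ) * (poch a p.1 * poch b p.2)) * (a + p.1) := by
        rw [Finset.Nat.sum_antidiagonal_succ'
          (f := fun p => ((j.choose p.1 : ℕ) : ℂ) * (poch a p.1 * poch b p.2))]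
        simp only [Nat.choose_succ_self, Nat.cast_zero, zero_mul, zero_add]
        congr 1
        apply Finset.sum_congr rfl
        intro p _
        rw [poch_succ]
        ring
      _ = ∑ p ∈ antidiagonal j,
            (a + b + j) * ((j.choose p.1 : ℂ) * (poch a p.1 * poch b p.2)) := by
        rw [← Finset.sum_add_distrib]
        apply Finset.sum_congr rfl
        intro p hp
        rw [Finset.HasAntidiagonal.mem_antidiagonal] at hp
        have hc : (p.1 : ℂ) + (p.2 : ℂ) = (j : ℂ) := by exact_mod_cast congrArg (Nat.cast (R := ℂ)) hp
        linear_combination (j.choose p.1 : ℂ) * (poch a p.1 * poch b p.2) * hc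
      _ = poch (a + b) (j + 1) := by
        rw [← Finset.mul_sum, ih, poch_succ]
        ring

lemma vand_div (a b : ℂ) (j : ℕ) :
    ∑ p ∈ antidiagonal j, poch a p.1 / (Nat.factorial p.1 : ℂ) * (poch b p.2 / (Nat.factorial p.2 : ℂ))
      = poch (a + b) j / (Nat.factorial j : ℂ) := by
  have hj : ((Nat.factorial j : ℂ)) ≠ 0 := Nat.cast_ne_zero.2 (Nat.factorial_ne_zero j)
  rw [eq_div_iff hj, ← vand a b j, Finset.sum_mul]
  apply Finset.sum_congr rfl
  intro p hp
  rw [Finset.HasAntidiagonal.mem_antidiagonal] at hp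
  have h1 : p.1 ≤ j := by omega
  rw [Nat.cast_choose ℂ h1, show j - p.1 = p.2 by omega]
  have f1 : ((Nat.factorial p.1 : ℂ)) ≠ 0 := Nat.cast_ne_zero.2 (Nat.factorial_ne_zero _)
  have f2 : ((Nat.factorial p.2 : ℂ)) ≠ 0 := Nat.cast_ne_zero.2 (Nat.factorial_ne_zero _)
  field_simp
lemma centralBinom_eq_poch : ∀ k : ℕ,
    ((2 * k).choose k : ℂ) = 2 ^ (2 * k) * poch (1 / 2) k / (Nat.factorial k : ℂ) := by
  intro k
  induction k with
  | zero => simp [poch_zero]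
  | succ k ih =>
    have hrec : (k + 1) * ((2 * (k + 1)).choose (k + 1)) = 2 * (2 * k + 1) * ((2 * k).choose k) := by
      have := Nat.succ_mul_centralBinom_succ k
      simpa [Nat.centralBinom] using this
    rw [show 2 * (k + 1) = 2 * k + 2 by ring] at hrec
    have hcast : ((k : ℂ) + 1) * (((2 * k + 2).choose (k + 1) : ℕ) : ℂ)
        = 2 * (2 * (k : ℂ) + 1) * (((2 * k).choose k : ℕ) : ℂ) := by exact_mod_cast hrec
    have hfk : ((Nat.factorial k : ℂ)) ≠ 0 := Nat.cast_ne_zero.2 (Nat.factorial_ne_zero _)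
    have hk1 : ((k : ℂ) + 1) ≠ 0 := by exact_mod_cast Nat.cast_add_one_ne_zero (R := ℂ) k
    have ih' : 2 ^ (2 * k) * poch (1 / 2) k = ((2 * k).choose k : ℂ) * (Nat.factorial k : ℂ) := by
      rw [ih]; field_simp
    rw [show 2 * (k + 1) = 2 * k + 2 by ring, poch_succ, Nat.factorial_succ]
    push_cast
    rw [eq_div_iff (by exact mul_ne_zero hk1 hfk)]
    have e2 : (2 : ℂ) ^ (2 * k + 2) = 2 ^ (2 * k) * 4 := by rw [pow_add]; norm_num
    rw [e2]
    linear_combination (Nat.factorial k : ℂ) * hcast - (4 * (k : ℂ) + 2) * ih'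
lemma Hs_succ (m : ℕ) : Hs (m + 1) = Hs m * c0 := by
  ext j
  rw [coeff_mul]
  simp only [Hs, c0, coeff_mk]
  have step : ∀ p ∈ antidiagonal j,
      2 ^ (2 * p.1) * poch (((m : ℂ) - 1) / 2) p.1 / (Nat.factorial p.1 : ℂ) *
        ((2 * p.2).choose p.2 : ℂ)
      = 2 ^ (2 * j) *
          (poch (((m : ℂ) - 1) / 2) p.1 / (Nat.factorial p.1 : ℂ) *
            (poch (1 / 2) p.2 / (Nat.factorial p.2 : ℂ))) := by
    intro p hp
    rw [Finset.HasAntidiagonal.mem_antidiagonal] at hp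
    rw [centralBinom_eq_poch p.2, ← hp, show 2 * (p.1 + p.2) = 2 * p.1 + 2 * p.2 by ring, pow_add]
    ring
  rw [Finset.sum_congr rfl step, ← Finset.mul_sum, vand_div]
  have harg : ((m : ℂ) - 1) / 2 + 1 / 2 = (((m + 1 : ℕ) : ℂ) - 1) / 2 := by
    push_cast
    ring
  rw [harg]
  ring

lemma main_ps (m : ℕ) (hm : 1 ≤ m) (z : ℂ) : Fz z ^ m = Hs m * Fz (m * z) := by
  induction m, hm using Nat.le_induction with
  | base => rw [pow_one, Hs_one, one_mul, Nat.cast_one, one_mul]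
  | succ m hm ih =>
    rw [pow_succ, ih, mul_assoc, Fz_mul, Hs_succ]
    have : ((m : ℂ)) * z + z = (((m + 1 : ℕ) : ℂ)) * z := by push_cast; ring
    rw [this]
    ring
lemma sum_tuple_succ (m n : ℕ) (g : (Fin (m + 1) → ℕ) → ℂ) :
    ∑ x ∈ Finset.Nat.antidiagonalTuple (m + 1) n, g x =
      ∑ p ∈ antidiagonal n, ∑ x ∈ Finset.Nat.antidiagonalTuple m p.2, g (Fin.cons p.1 x) := by
  rw [← Finset.sum_sigma (antidiagonal n) (fun p => Finset.Nat.antidiagonalTuple m p.2)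
    (fun a => g (Fin.cons a.1.1 a.2))]
  refine Finset.sum_bij'
    (i := fun (x : Fin (m + 1) → ℕ) (_ : x ∈ Finset.Nat.antidiagonalTuple (m + 1) n) =>
      (⟨(x 0, ∑ i : Fin m, x i.succ), Fin.tail x⟩ : (_p : ℕ × ℕ) × (Fin m → ℕ)))
    (j := fun (a : (_p : ℕ × ℕ) × (Fin m → ℕ)) _ => Fin.cons a.1.1 a.2)
    ?_ ?_ ?_ ?_ ?_
  · intro x hx
    rw [Finset.Nat.mem_antidiagonalTuple, Fin.sum_univ_succ] at hx
    simp only [Finset.mem_sigma, Finset.HasAntidiagonal.mem_antidiagonal, Finset.Nat.mem_antidiagonalTuple]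
    exact ⟨hx, rfl⟩
  · intro a ha
    simp only [Finset.mem_sigma, Finset.HasAntidiagonal.mem_antidiagonal, Finset.Nat.mem_antidiagonalTuple] at ha
    rw [Finset.Nat.mem_antidiagonalTuple, Fin.sum_univ_succ]
    simp only [Fin.cons_zero, Fin.cons_succ]
    rw [ha.2, ha.1]
  · intro x hx
    simp only [Fin.cons_self_tail]
  · intro a ha
    simp only [Finset.mem_sigma, Finset.HasAntidiagonal.mem_antidiagonal, Finset.Nat.mem_antidiagonalTuple] at ha
    simp only [Fin.cons_zero, Fin.cons_succ, Fin.tail_cons]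
    have h2 : (∑ i : Fin m, a.2 i) = a.1.2 := ha.2
    obtain ⟨⟨p1, p2⟩, y⟩ := a
    simp only at h2 ⊢
    rw [h2]
  · intro x hx
    simp only [Fin.cons_self_tail]

lemma coeff_pow_tuple (f : ℂ⟦X⟧) : ∀ (m n : ℕ),
    (coeff n) (f ^ m) = ∑ x ∈ Finset.Nat.antidiagonalTuple m n, ∏ i, (coeff (x i)) f := by
  intro m
  induction m with
  | zero =>
    intro n
    rcases n with _ | n
    · simp
    · simp [coeff_one]
  | succ m ih =>
    intro n
    rw [pow_succ', coeff_mul, sum_tuple_succ m n (fun x => ∏ i, (coeff (x i)) f)]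
    apply Finset.sum_congr rfl
    intro p _
    rw [ih p.2, Finset.mul_sum]
    apply Finset.sum_congr rfl
    intro x _
    rw [Fin.prod_univ_succ]
    simp only [Fin.cons_zero, Fin.cons_succ]
end BesselGF

open BesselGF in
theorem stmt_1 (m : ℕ) (hm : 2 ≤ m) (n : ℕ) (z : ℂ) :
    ∑ k ∈ Finset.Nat.antidiagonalTuple m n,
      ∏ i, (((2 * k i).choose (k i) : ℂ) * besselQ (k i) z) =
    ∑ k ∈ Finset.range (n + 1),
      ((2 * k).choose k : ℂ) * 2 ^ (2 * n - 2 * k) * poch (((m : ℂ) - 1) / 2) (n - k)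
        / (Nat.factorial (n - k) : ℂ) * besselQ k (m * z) := by
  have hL : ∑ k ∈ Finset.Nat.antidiagonalTuple m n,
      ∏ i, (((2 * k i).choose (k i) : ℂ) * besselQ (k i) z) = (coeff n) (Fz z ^ m) := by
    rw [coeff_pow_tuple]
    apply Finset.sum_congr rfl
    intro x _
    apply Finset.prod_congr rfl
    intro i _
    rw [Fz, coeff_mk]
  rw [hL, main_ps m (by omega) z, mul_comm, coeff_mul,
    Finset.Nat.sum_antidiagonal_eq_sum_range_succ
      (f := fun a b => (coeff a) (Fz ((m : ℂ) * z)) * (coeff b) (Hs m))]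
  apply Finset.sum_congr rfl
  intro k hk
  have hk' : k ≤ n := by simp only [Finset.mem_range] at hk; omega
  rw [Fz, Hs, coeff_mk, coeff_mk]
  rw [show 2 * (n - k) = 2 * n - 2 * k by omega]
  ring
end

section
/- For every integer m ≥ 2, every n ∈ ℕ, and all complex numbers z₁, …, z_m with z = z₁ + ⋯ + z_m, the reverse Bessel polynomials satisfy ∑_{k₁+⋯+k_m = n} ∏_{i=1}^{m} θ_{kᵢ}(zᵢ)/kᵢ! = ∑_{k=0}^{n} [2^{n-k} · ((m-1)/2)_{n-k} / (n-k)!] · θ_k(z)/k!, where the sum on the left is over all m-tuples (k₁, …, k_m) of nonnegative integers summing to n. -/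
/-- The reverse Bessel polynomial `θ_n(z) = ((2n)!/n!) 2^{-n} q_n(z)`. -/
noncomputable def besselTheta (n : ℕ) (z : ℂ) : ℂ :=
  ((Nat.factorial (2 * n) : ℂ) / (Nat.factorial n : ℂ)) * ((2 : ℂ) ^ n)⁻¹ * besselQ n z

namespace BesselAux

open Finset PowerSeries

lemma fact_ne (n : ℕ) : (Nat.factorial n : ℂ) ≠ 0 :=
  Nat.cast_ne_zero.2 n.factorial_ne_zero

lemma two_pow_ne (n : ℕ) : ((2 : ℂ) ^ n) ≠ 0 := pow_ne_zero _ two_ne_zero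

lemma succ_ne (n : ℕ) : ((n : ℂ) + 1) ≠ 0 := Nat.cast_add_one_ne_zero n

lemma poch_zero (a : ℂ) : poch a 0 = 1 := by simp [poch]

lemma poch_succ (a : ℂ) (j : ℕ) : poch a (j + 1) = poch a j * (a + j) :=
  Finset.prod_range_succ _ _

lemma poch_zero_left (j : ℕ) : poch 0 (j + 1) = 0 := by
  apply Finset.prod_eq_zero (Finset.mem_range.2 (Nat.succ_pos j))
  simp

lemma poch_one (j : ℕ) : poch 1 j = Nat.factorial j := by
  induction j with
  | zero => simp [poch]
  | succ j ih => rw [poch_succ, ih, Nat.factorial_succ]; push_cast; ring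

/-- Vandermonde convolution for rising factorials. -/
lemma poch_vandermonde (a b : ℂ) (n : ℕ) :
    ∑ i ∈ range (n + 1), (n.choose i : ℂ) * poch a i * poch b (n - i) = poch (a + b) n := by
  induction n with
  | zero => simp [poch]
  | succ n ih =>
    rw [Finset.sum_range_succ' _ (n + 1)]
    have hsplit : ∀ i ∈ range (n + 1),
        (((n + 1).choose (i + 1) : ℕ) : ℂ) * poch a (i + 1) * poch b (n + 1 - (i + 1))
        = (n.choose i : ℂ) * poch a i * ((a + i) * poch b (n - i))
          + (n.choose (i + 1) : ℂ) * poch a (i + 1) * poch b (n - i) := by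
      intro i _
      rw [show n + 1 - (i + 1) = n - i from by omega, Nat.choose_succ_succ, poch_succ]
      push_cast
      ring
    rw [Finset.sum_congr rfl hsplit, Finset.sum_add_distrib]
    simp only [Nat.choose_zero_right, Nat.cast_one, one_mul, poch_zero, Nat.sub_zero]
    have hB : (∑ i ∈ range (n + 1), (n.choose (i + 1) : ℂ) * poch a (i + 1) * poch b (n - i))
          + poch b (n + 1)
        = ∑ i ∈ range (n + 1),
            (n.choose i : ℂ) * poch a i * (poch b (n - i) * (b + ((n : ℂ) - i))) := by
      have e1 : ∀ i ∈ range (n + 1),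
          (n.choose i : ℂ) * poch a i * (poch b (n - i) * (b + ((n : ℂ) - i)))
          = (n.choose i : ℂ) * poch a i * poch b (n + 1 - i) := by
        intro i hi
        rw [Finset.mem_range] at hi
        rw [show ((n : ℂ) - i) = ((n - i : ℕ) : ℂ) from by
            rw [Nat.cast_sub (by omega)],
          show n + 1 - i = (n - i) + 1 from by omega, poch_succ]
      rw [Finset.sum_congr rfl e1,
        Finset.sum_range_succ' (fun i => (n.choose i : ℂ) * poch a i * poch b (n + 1 - i)) n,
        Finset.sum_range_succ]
      simp only [Nat.choose_succ_self, Nat.cast_zero, zero_mul, add_zero,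
        Nat.choose_zero_right, Nat.cast_one, one_mul, poch_zero, Nat.sub_zero]
      congr 1
      apply Finset.sum_congr rfl
      intro i hi
      rw [show n + 1 - (i + 1) = n - i from by omega]
    rw [add_assoc, hB, ← Finset.sum_add_distrib]
    have e2 : ∀ i ∈ range (n + 1),
        (n.choose i : ℂ) * poch a i * ((a + i) * poch b (n - i))
          + (n.choose i : ℂ) * poch a i * (poch b (n - i) * (b + ((n : ℂ) - i)))
        = ((n.choose i : ℂ) * poch a i * poch b (n - i)) * (a + b + n) := by
      intro i _
      ring
    rw [Finset.sum_congr rfl e2, ← Finset.sum_mul, ih, ← poch_succ]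

/-- coefficients of `(1-2t)^{-a}` -/
noncomputable def hs (a : ℂ) (j : ℕ) : ℂ := 2 ^ j * poch a j / (Nat.factorial j : ℂ)

lemma hs_conv (a b : ℂ) (n : ℕ) :
    ∑ i ∈ range (n + 1), hs a i * hs b (n - i) = hs (a + b) n := by
  have h : ∀ i ∈ range (n + 1), hs a i * hs b (n - i)
      = (2 ^ n / (Nat.factorial n : ℂ)) * ((n.choose i : ℂ) * poch a i * poch b (n - i)) := by
    intro i hi
    rw [Finset.mem_range] at hi
    have hle : i ≤ n := by omega
    unfold hs
    rw [Nat.cast_choose ℂ hle, show (2:ℂ)^n = 2^i * 2^(n-i) from by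
      rw [← pow_add]; congr 1; omega]
    field_simp
    rw [mul_div_mul_right _ _ (fact_ne n)]
  rw [Finset.sum_congr rfl h, ← Finset.mul_sum, poch_vandermonde]
  unfold hs
  ring

noncomputable def Hs (a : ℂ) : PowerSeries ℂ := PowerSeries.mk (hs a)

lemma Hs_mul (a b : ℂ) : Hs a * Hs b = Hs (a + b) := by
  ext n
  rw [Hs, Hs, Hs, PowerSeries.coeff_mk, PowerSeries.coeff_mul,
    Finset.Nat.sum_antidiagonal_eq_sum_range_succ_mk, ← hs_conv a b n]
  simp [PowerSeries.coeff_mk]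

lemma hs_zero_eq (j : ℕ) : hs 0 j = if j = 0 then 1 else 0 := by
  cases j with
  | zero => simp [hs, poch_zero]
  | succ j => simp [hs, poch_zero_left]

lemma Hs_zero : Hs 0 = 1 := by
  ext n
  rw [Hs, PowerSeries.coeff_mk, hs_zero_eq, PowerSeries.coeff_one]

noncomputable def G : PowerSeries ℂ := Hs (1/2)

lemma g_zero : hs (1/2) 0 = 1 := by simp [hs, poch_zero]

lemma g_succ (j : ℕ) : ((j : ℂ) + 1) * hs (1/2) (j + 1) = (2 * j + 1) * hs (1/2) j := by
  unfold hs
  rw [poch_succ, Nat.factorial_succ, pow_succ]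
  have h1 : ((j : ℂ) + 1) ≠ 0 := succ_ne j
  have h2 : (Nat.factorial j : ℂ) ≠ 0 := fact_ne j
  push_cast
  field_simp
  ring

lemma e_zero' : True := trivial

/-- The exponential-like series coefficients. -/
noncomputable def e (z : ℂ) : ℕ → ℂ
  | 0 => 1
  | n + 1 => (z / (n + 1)) * ∑ i ∈ Finset.range (n + 1), hs (1/2) i * e z (n - i)
  decreasing_by exact Nat.lt_succ_of_le (Nat.sub_le n i)

noncomputable def E (z : ℂ) : PowerSeries ℂ := PowerSeries.mk (e z)

lemma e_zero (z : ℂ) : e z 0 = 1 := by rw [e]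

lemma e_succ (z : ℂ) (n : ℕ) :
    e z (n + 1) = (z / ((n : ℂ) + 1)) * ∑ i ∈ Finset.range (n + 1), hs (1/2) i * e z (n - i) := by
  rw [e]

lemma coeff_G_mul (Y : PowerSeries ℂ) (n : ℕ) :
    PowerSeries.coeff (R := ℂ) n (G * Y) = ∑ i ∈ range (n + 1), hs (1/2) i * PowerSeries.coeff (R := ℂ) (n - i) Y := by
  rw [PowerSeries.coeff_mul, Finset.Nat.sum_antidiagonal_eq_sum_range_succ_mk]
  simp [G, Hs, PowerSeries.coeff_mk]

lemma deriv_E (z : ℂ) : PowerSeries.derivative ℂ (E z) = PowerSeries.C (R := ℂ) z * (G * E z) := by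
  ext n
  rw [PowerSeries.coeff_derivative, PowerSeries.coeff_C_mul, coeff_G_mul]
  simp only [E, PowerSeries.coeff_mk]
  rw [e_succ]
  have h1 : ((n : ℂ) + 1) ≠ 0 := succ_ne n
  field_simp

lemma E_unique (Y : PowerSeries ℂ) (w : ℂ) (h0 : PowerSeries.coeff (R := ℂ) 0 Y = 1)
    (hd : PowerSeries.derivative ℂ Y = PowerSeries.C (R := ℂ) w * (G * Y)) : Y = E w := by
  ext n
  induction n using Nat.strong_induction_on with
  | _ n ih =>
    match n with
    | 0 => rw [h0]; simp only [E, PowerSeries.coeff_mk]; rw [e_zero]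
    | m + 1 =>
      have hc := congrArg (PowerSeries.coeff (R := ℂ) m) hd
      rw [PowerSeries.coeff_derivative, PowerSeries.coeff_C_mul, coeff_G_mul] at hc
      have hsum : ∀ i ∈ range (m+1), hs (1/2) i * PowerSeries.coeff (R := ℂ) (m - i) Y
          = hs (1/2) i * e w (m - i) := by
        intro i _
        rw [ih (m - i) (Nat.lt_succ_of_le (Nat.sub_le m i)), E, PowerSeries.coeff_mk]
      rw [Finset.sum_congr rfl hsum] at hc
      simp only [E, PowerSeries.coeff_mk]
      rw [e_succ]
      have h1 : ((m : ℂ) + 1) ≠ 0 := succ_ne m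
      field_simp
      linear_combination hc

lemma E_mul (z w : ℂ) : E z * E w = E (z + w) := by
  apply E_unique
  · rw [PowerSeries.coeff_zero_eq_constantCoeff, map_mul]
    have hz : (PowerSeries.constantCoeff (R := ℂ)) (E z) = 1 := by
      rw [← PowerSeries.coeff_zero_eq_constantCoeff]
      simp only [E, PowerSeries.coeff_mk]; rw [e_zero]
    have hw : (PowerSeries.constantCoeff (R := ℂ)) (E w) = 1 := by
      rw [← PowerSeries.coeff_zero_eq_constantCoeff]
      simp only [E, PowerSeries.coeff_mk]; rw [e_zero]
    rw [hz, hw, mul_one]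
  · rw [Derivation.leibniz, smul_eq_mul, smul_eq_mul, deriv_E, deriv_E, map_add]
    ring

lemma E_zero : E 0 = 1 := by
  symm
  apply E_unique
  · simp
  · simp

lemma C_two : (2 : PowerSeries ℂ) = PowerSeries.C (R := ℂ) 2 := (map_ofNat _ 2).symm

lemma coeff_one_sub_two_X_mul (f : PowerSeries ℂ) (n : ℕ) :
    PowerSeries.coeff (R := ℂ) n ((1 - 2 * PowerSeries.X) * f)
      = PowerSeries.coeff (R := ℂ) n f - 2 * PowerSeries.coeff (R := ℂ) n (PowerSeries.X * f) := by
  rw [show (1 - 2 * PowerSeries.X) * f = f - 2 * (PowerSeries.X * f) from by ring, map_sub,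
    C_two, PowerSeries.coeff_C_mul]

lemma g_one : hs (1/2) 1 = 1 := by
  norm_num [hs, poch]

lemma deriv_G : (1 - 2 * PowerSeries.X) * PowerSeries.derivative ℂ G = G := by
  ext n
  rw [coeff_one_sub_two_X_mul]
  show _ = PowerSeries.coeff (R := ℂ) n (Hs (1/2))
  rw [Hs, PowerSeries.coeff_mk]
  cases n with
  | zero =>
    rw [PowerSeries.coeff_zero_X_mul, PowerSeries.coeff_derivative]
    show PowerSeries.coeff (R := ℂ) 1 (Hs (1/2)) * _ - _ = _
    rw [Hs, PowerSeries.coeff_mk, g_one, g_zero]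
    norm_num
  | succ m =>
    rw [PowerSeries.coeff_succ_X_mul, PowerSeries.coeff_derivative, PowerSeries.coeff_derivative]
    show PowerSeries.coeff (R := ℂ) (m+2) (Hs (1/2)) * _ - 2 * (PowerSeries.coeff (R := ℂ) (m+1) (Hs (1/2)) * _) = _
    rw [Hs, PowerSeries.coeff_mk, PowerSeries.coeff_mk]
    have h := g_succ (m + 1)
    push_cast at h ⊢
    linear_combination h

lemma G_sq : (1 - 2 * PowerSeries.X) * (G * G) = 1 := by
  have hGG : G * G = Hs 1 := by
    rw [G, Hs_mul]; norm_num
  rw [hGG]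
  ext n
  rw [coeff_one_sub_two_X_mul]
  have hcoeff : ∀ k, PowerSeries.coeff (R := ℂ) k (Hs 1) = 2 ^ k := by
    intro k
    rw [Hs, PowerSeries.coeff_mk, hs, poch_one, mul_div_assoc, div_self (fact_ne k), mul_one]
  cases n with
  | zero =>
    rw [PowerSeries.coeff_zero_X_mul, hcoeff]
    simp
  | succ m =>
    rw [PowerSeries.coeff_succ_X_mul, hcoeff, hcoeff, PowerSeries.coeff_one]
    rw [pow_succ]
    simp [Nat.succ_ne_zero]
    ring

lemma ode1 (z : ℂ) : (1 - 2 * PowerSeries.X) * PowerSeries.derivative ℂ (G * E z)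
    = (G * E z) + PowerSeries.C (R := ℂ) z * E z := by
  rw [Derivation.leibniz, smul_eq_mul, smul_eq_mul, deriv_E]
  calc (1 - 2 * PowerSeries.X) * (G * (PowerSeries.C (R := ℂ) z * (G * E z)) + E z * PowerSeries.derivative ℂ G)
      = PowerSeries.C (R := ℂ) z * ((1 - 2 * PowerSeries.X) * (G * G)) * E z
        + ((1 - 2 * PowerSeries.X) * PowerSeries.derivative ℂ G) * E z := by ring
    _ = _ := by rw [G_sq, deriv_G]; ring

lemma deriv_one_sub_two_X : PowerSeries.derivative ℂ (1 - 2 * PowerSeries.X) = -2 := by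
  rw [map_sub, two_mul, map_add, PowerSeries.derivative_X, Derivation.map_one_eq_zero]
  norm_num

lemma ode2 (z : ℂ) : (1 - 2 * PowerSeries.X) * PowerSeries.derivative ℂ (PowerSeries.derivative ℂ (G * E z))
    = 3 * PowerSeries.derivative ℂ (G * E z) + PowerSeries.C (R := ℂ) (z ^ 2) * (G * E z) := by
  have h := congrArg (⇑(PowerSeries.derivative ℂ)) (ode1 z)
  rw [Derivation.leibniz (PowerSeries.derivative ℂ) (1 - 2 * PowerSeries.X)
      (PowerSeries.derivative ℂ (G * E z)),
    map_add,
    Derivation.leibniz (PowerSeries.derivative ℂ) (PowerSeries.C (R := ℂ) z) (E z),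
    PowerSeries.derivative_C, deriv_E z, deriv_one_sub_two_X,
    smul_eq_mul, smul_eq_mul, smul_eq_mul, smul_eq_mul] at h
  rw [show PowerSeries.C (R := ℂ) z * (PowerSeries.C (R := ℂ) z * (G * E z))
      = PowerSeries.C (R := ℂ) (z ^ 2) * (G * E z) from by rw [sq, map_mul]; ring] at h
  linear_combination h

lemma coeff_three_mul (f : PowerSeries ℂ) (n : ℕ) :
    PowerSeries.coeff (R := ℂ) n (3 * f) = 3 * PowerSeries.coeff (R := ℂ) n f := by
  rw [show (3 : PowerSeries ℂ) = PowerSeries.C (R := ℂ) 3 from (map_ofNat _ 3).symm,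
    PowerSeries.coeff_C_mul]

lemma y_rec (z : ℂ) (n : ℕ) :
    ((n : ℂ) + 1) * ((n : ℂ) + 2) * PowerSeries.coeff (R := ℂ) (n + 2) (G * E z)
      = (2 * (n : ℂ) + 3) * ((n : ℂ) + 1) * PowerSeries.coeff (R := ℂ) (n + 1) (G * E z)
        + z ^ 2 * PowerSeries.coeff (R := ℂ) n (G * E z) := by
  have h := congrArg (PowerSeries.coeff (R := ℂ) n) (ode2 z)
  rw [coeff_one_sub_two_X_mul, map_add, coeff_three_mul, PowerSeries.coeff_C_mul,
    PowerSeries.coeff_derivative, PowerSeries.coeff_derivative, PowerSeries.coeff_derivative] at h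
  cases n with
  | zero =>
    rw [PowerSeries.coeff_zero_X_mul] at h
    push_cast at h ⊢
    linear_combination h
  | succ m =>
    rw [PowerSeries.coeff_succ_X_mul, PowerSeries.coeff_derivative,
      PowerSeries.coeff_derivative] at h
    push_cast at h ⊢
    linear_combination h

/-! ### The reverse Bessel polynomials: explicit coefficients and recurrence -/

noncomputable def T (n l : ℕ) : ℂ :=
  (Nat.factorial (2 * n - l) : ℂ) / (2 ^ (n - l) * (Nat.factorial (n - l) : ℂ) * (Nat.factorial l : ℂ))

lemma T_eq {n j u : ℕ} (h : n = j + u) :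
    T n j = (Nat.factorial (j + 2 * u) : ℂ) / (2 ^ u * (Nat.factorial u : ℂ) * (Nat.factorial j : ℂ)) := by
  subst h
  unfold T
  rw [show 2 * (j + u) - j = j + 2 * u from by omega, show j + u - j = u from by omega]

lemma fact2 (k : ℕ) : (Nat.factorial (k + 2) : ℂ) = ((k : ℂ) + 2) * ((k : ℂ) + 1) * (Nat.factorial k : ℂ) := by
  rw [show k + 2 = (k + 1) + 1 from rfl, Nat.factorial_succ, Nat.factorial_succ]
  push_cast
  ring

lemma theta_eq (n : ℕ) (z : ℂ) :
    besselTheta n z = ∑ l ∈ range (n + 1), T n l * z ^ l := by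
  unfold besselTheta besselQ
  rw [Finset.mul_sum]
  apply Finset.sum_congr rfl
  intro l hl
  rw [Finset.mem_range] at hl
  obtain ⟨u, rfl⟩ : ∃ u, n = l + u := ⟨n - l, by omega⟩
  rw [T_eq rfl]
  rw [Nat.cast_choose ℂ (show l ≤ l + u by omega),
    Nat.cast_choose ℂ (show l ≤ 2 * (l + u) by omega),
    show l + u - l = u from by omega, show 2 * (l + u) - l = l + 2 * u from by omega,
    show 2 * (l + u) = (l + u) + (l + u) from by ring]
  rw [mul_pow]
  have h1 := fact_ne l
  have h2 := fact_ne u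
  have h3 := fact_ne (l + u)
  have h4 := fact_ne (l + 2 * u)
  have h5 := fact_ne ((l + u) + (l + u))
  have h6 := two_pow_ne l
  have h7 := two_pow_ne u
  rw [pow_add, mul_inv]
  field_simp

lemma theta_zero (z : ℂ) : besselTheta 0 z = 1 := by
  simp [besselTheta, besselQ]

lemma theta_one (z : ℂ) : besselTheta 1 z = z + 1 := by
  rw [theta_eq]
  rw [Finset.sum_range_succ, Finset.sum_range_one]
  rw [T_eq (show 1 = 1 + 0 from rfl), T_eq (show 1 = 0 + 1 from rfl)]
  simp [Nat.factorial]
  ring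

lemma T_top (n : ℕ) : T n n = 1 := by
  rw [T_eq (show n = n + 0 from rfl)]
  simp only [Nat.mul_zero, Nat.add_zero, pow_zero, Nat.factorial_zero, Nat.cast_one, one_mul,
    mul_one]
  exact div_self (fact_ne n)

lemma T_zero_rec (n : ℕ) : T (n + 2) 0 = (2 * (n : ℂ) + 3) * T (n + 1) 0 := by
  rw [T_eq (show n + 2 = 0 + (n + 2) from by omega), T_eq (show n + 1 = 0 + (n + 1) from by omega)]
  have e1 : ((0 + 2 * (n + 2)).factorial : ℂ)
      = (2 * (n : ℂ) + 4) * (2 * (n : ℂ) + 3) * ((0 + 2 * (n + 1)).factorial : ℂ) := by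
    rw [show 0 + 2 * (n + 2) = (0 + 2 * (n + 1)) + 1 + 1 from by omega,
      Nat.factorial_succ, Nat.factorial_succ]
    push_cast
    ring
  have e2 : ((n + 2).factorial : ℂ) = ((n : ℂ) + 2) * ((n + 1).factorial : ℂ) := by
    rw [show n + 2 = (n + 1) + 1 from by omega, Nat.factorial_succ]
    push_cast
    ring
  rw [e1, e2, show n + 2 = (n + 1) + 1 from by omega, pow_succ]
  have h1 := fact_ne (0 + 2 * (n + 1))
  have h2 := fact_ne (n + 1)
  have h3 := two_pow_ne (n + 1)
  have h4 : ((n : ℂ) + 2) ≠ 0 := by norm_cast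
  have h5 := fact_ne 0
  field_simp
  ring

lemma T_one_rec (n : ℕ) : T (n + 2) 1 = (2 * (n : ℂ) + 3) * T (n + 1) 1 := by
  rw [T_eq (show n + 2 = 1 + (n + 1) from by omega), T_eq (show n + 1 = 1 + n from by omega)]
  have e1 : ((1 + 2 * (n + 1)).factorial : ℂ)
      = (2 * (n : ℂ) + 3) * (2 * (n : ℂ) + 2) * ((1 + 2 * n).factorial : ℂ) := by
    rw [show 1 + 2 * (n + 1) = (1 + 2 * n) + 1 + 1 from by omega,
      Nat.factorial_succ, Nat.factorial_succ]
    push_cast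
    ring
  have e2 : ((n + 1).factorial : ℂ) = ((n : ℂ) + 1) * (n.factorial : ℂ) := by
    rw [Nat.factorial_succ]
    push_cast
    ring
  rw [e1, e2, pow_succ]
  have h1 := fact_ne (1 + 2 * n)
  have h2 := fact_ne n
  have h3 := two_pow_ne n
  have h4 : ((n : ℂ) + 1) ≠ 0 := succ_ne n
  have h5 := fact_ne 1
  field_simp

lemma T_mid_rec (n j : ℕ) (h : j < n) :
    T (n + 2) (j + 2) = (2 * (n : ℂ) + 3) * T (n + 1) (j + 2) + T n j := by
  obtain ⟨u, rfl⟩ : ∃ u, n = j + u + 1 := ⟨n - j - 1, by omega⟩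
  rw [T_eq (show j + u + 1 + 2 = (j + 2) + (u + 1) from by omega),
    T_eq (show j + u + 1 + 1 = (j + 2) + u from by omega),
    T_eq (show j + u + 1 = j + (u + 1) from by omega)]
  have e1 : (((j + 2) + 2 * (u + 1)).factorial : ℂ)
      = ((j : ℂ) + 2 * u + 4) * ((j : ℂ) + 2 * u + 3) * (((j + 2) + 2 * u).factorial : ℂ) := by
    rw [show (j + 2) + 2 * (u + 1) = ((j + 2) + 2 * u) + 1 + 1 from by omega,
      Nat.factorial_succ, Nat.factorial_succ]
    push_cast
    ring
  have e2 : ((j + 2 * (u + 1)).factorial : ℂ) = (((j + 2) + 2 * u).factorial : ℂ) := by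
    rw [show j + 2 * (u + 1) = (j + 2) + 2 * u from by omega]
  have e3 : ((u + 1).factorial : ℂ) = ((u : ℂ) + 1) * (u.factorial : ℂ) := by
    rw [Nat.factorial_succ]
    push_cast
    ring
  have e4 : ((j + 2).factorial : ℂ) = ((j : ℂ) + 2) * ((j : ℂ) + 1) * (j.factorial : ℂ) := fact2 j
  rw [e1, e2, e3, e4, pow_succ]
  have h1 := fact_ne ((j + 2) + 2 * u)
  have h2 := fact_ne u
  have h3 := fact_ne j
  have h4 := two_pow_ne u
  have h5 : ((u : ℂ) + 1) ≠ 0 := succ_ne u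
  have h6 : ((j : ℂ) + 1) ≠ 0 := succ_ne j
  have h7 : ((j : ℂ) + 2) ≠ 0 := by norm_cast
  field_simp
  push_cast
  ring

lemma theta_rec (n : ℕ) (z : ℂ) :
    besselTheta (n + 2) z = (2 * (n : ℂ) + 3) * besselTheta (n + 1) z + z ^ 2 * besselTheta n z := by
  rw [theta_eq (n + 2), theta_eq (n + 1), theta_eq n]
  rw [Finset.sum_range_succ' _ (n + 2), Finset.sum_range_succ' _ (n + 1)]
  rw [Finset.sum_range_succ' (fun l => T (n + 1) l * z ^ l) (n + 1),
    Finset.sum_range_succ' (fun k => T (n + 1) (k + 1) * z ^ (k + 1)) n]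
  rw [Finset.sum_range_succ (fun i => T (n + 2) (i + 1 + 1) * z ^ (i + 1 + 1)) n]
  rw [Finset.sum_range_succ (fun l => T n l * z ^ l) n]
  have hmid : ∀ i ∈ range n,
      T (n + 2) (i + 1 + 1) * z ^ (i + 1 + 1)
      = (2 * (n : ℂ) + 3) * (T (n + 1) (i + 1 + 1) * z ^ (i + 1 + 1)) + z ^ 2 * (T n i * z ^ i) := by
    intro i hi
    rw [Finset.mem_range] at hi
    rw [show i + 1 + 1 = i + 2 from rfl, T_mid_rec n i hi]
    ring
  rw [Finset.sum_congr rfl hmid, Finset.sum_add_distrib, ← Finset.mul_sum, ← Finset.mul_sum]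
  have h0 : T (n + 2) 0 = (2 * (n : ℂ) + 3) * T (n + 1) 0 := T_zero_rec n
  have h1 : T (n + 2) (0 + 1) = (2 * (n : ℂ) + 3) * T (n + 1) (0 + 1) := T_one_rec n
  have htop : T (n + 2) (n + 1 + 1) = T n n := by
    rw [show n + 1 + 1 = n + 2 from rfl, T_top, T_top]
  rw [h0, h1, htop, T_top]
  ring

/-! ### The power series of the reverse Bessel polynomials -/

noncomputable def Th (z : ℂ) : PowerSeries ℂ :=
  PowerSeries.mk (fun n => besselTheta n z / (Nat.factorial n : ℂ))

lemma coeff_GE_zero (z : ℂ) : PowerSeries.coeff (R := ℂ) 0 (G * E z) = 1 := by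
  rw [coeff_G_mul]
  simp only [zero_add, Finset.sum_range_one, Nat.sub_zero]
  simp only [E, PowerSeries.coeff_mk]
  rw [e_zero, g_zero, mul_one]

lemma coeff_GE_one (z : ℂ) : PowerSeries.coeff (R := ℂ) 1 (G * E z) = z + 1 := by
  rw [coeff_G_mul]
  rw [Finset.sum_range_succ, Finset.sum_range_one]
  simp only [E, PowerSeries.coeff_mk, Nat.sub_zero, Nat.sub_self]
  rw [e_zero, g_zero, g_one, e_succ, Finset.sum_range_one]
  simp only [Nat.sub_self, Nat.sub_zero]
  rw [e_zero, g_zero]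
  push_cast
  ring

lemma Th_eq (z : ℂ) : Th z = G * E z := by
  ext n
  induction n using Nat.strong_induction_on with
  | _ n ih =>
    match n with
    | 0 =>
      rw [Th, PowerSeries.coeff_mk, theta_zero, coeff_GE_zero]
      norm_num
    | 1 =>
      rw [Th, PowerSeries.coeff_mk, theta_one, coeff_GE_one]
      simp [Nat.factorial]
    | (m+2) =>
      have h1 := ih (m+1) (by omega)
      have h0 := ih m (by omega)
      rw [Th, PowerSeries.coeff_mk] at h1 h0
      have hy := y_rec z m
      rw [← h1, ← h0] at hy
      rw [Th, PowerSeries.coeff_mk]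
      have hne : (((m : ℂ)+1) * ((m : ℂ)+2)) ≠ 0 :=
        mul_ne_zero (succ_ne m) (by norm_cast)
      apply mul_left_cancel₀ hne
      rw [hy, theta_rec m z, fact2 m,
        show ((m+1).factorial : ℂ) = ((m : ℂ)+1) * (m.factorial : ℂ) from by
          rw [Nat.factorial_succ]; push_cast; ring]
      have hf := fact_ne m
      have ha : ((m : ℂ)+1) ≠ 0 := succ_ne m
      have hb : ((m : ℂ)+2) ≠ 0 := by norm_cast
      field_simp

lemma Th_mul (x y : ℂ) : Th x * Th y = Hs (1/2) * Th (x + y) := by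
  rw [Th_eq, Th_eq, Th_eq, ← E_mul]
  show (G * E x) * (G * E y) = G * (G * (E x * E y))
  ring

lemma main_ps : ∀ (m : ℕ) (zv : Fin m → ℂ),
    ∏ i, Th (zv i) = Hs (((m : ℂ) - 1)/2) * Th (∑ i, zv i) := by
  intro m
  induction m with
  | zero =>
    intro zv
    rw [Fin.prod_univ_zero, Fin.sum_univ_zero]
    rw [Th_eq, E_zero, mul_one, Nat.cast_zero,
      show G = Hs (1/2) from rfl, Hs_mul,
      show ((0:ℂ) - 1)/2 + 1/2 = 0 from by norm_num, Hs_zero]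
  | succ m ih =>
    intro zv
    rw [Fin.prod_univ_succ, Fin.sum_univ_succ, ih (fun i => zv i.succ)]
    rw [show Th (zv 0) * (Hs (((m : ℂ) - 1)/2) * Th (∑ i : Fin m, zv i.succ))
        = Hs (((m : ℂ) - 1)/2) * (Th (zv 0) * Th (∑ i : Fin m, zv i.succ)) from by ring,
      Th_mul,
      show Hs (((m : ℂ) - 1)/2) * (Hs (1/2) * Th (zv 0 + ∑ i : Fin m, zv i.succ))
        = (Hs (((m : ℂ) - 1)/2) * Hs (1/2)) * Th (zv 0 + ∑ i : Fin m, zv i.succ) from by ring,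
      Hs_mul,
      show ((m : ℂ) - 1)/2 + 1/2 = (((m + 1 : ℕ) : ℂ) - 1)/2 from by push_cast; ring]

lemma coeff_prod_fin (m n : ℕ) (F : Fin m → PowerSeries ℂ) :
    PowerSeries.coeff (R := ℂ) n (∏ i, F i)
      = ∑ k ∈ Finset.Nat.antidiagonalTuple m n, ∏ i, PowerSeries.coeff (R := ℂ) (k i) (F i) := by
  rw [PowerSeries.coeff_prod]
  apply Finset.sum_nbij' (i := fun (l : Fin m →₀ ℕ) => ⇑l)
    (j := fun k => Finsupp.equivFunOnFinite.symm k)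
  · intro l hl
    rw [Finset.mem_finsuppAntidiag] at hl
    rw [Finset.Nat.mem_antidiagonalTuple]
    exact hl.1
  · intro k hk
    rw [Finset.Nat.mem_antidiagonalTuple] at hk
    rw [Finset.mem_finsuppAntidiag]
    constructor
    · rw [← hk]
      apply Finset.sum_congr rfl
      intro i _
      simp
    · exact Finset.subset_univ _
  · intro l _
    exact Finsupp.equivFunOnFinite.symm_apply_apply l
  · intro k _
    exact Finsupp.equivFunOnFinite.apply_symm_apply k
  · intro l _
    rfl

lemma coeff_Hs_mul (a z : ℂ) (n : ℕ) :
    PowerSeries.coeff (R := ℂ) n (Hs a * Th z)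
      = ∑ k ∈ range (n + 1), hs a (n - k) * (besselTheta k z / (Nat.factorial k : ℂ)) := by
  rw [PowerSeries.coeff_mul, Finset.Nat.sum_antidiagonal_eq_sum_range_succ_mk]
  simp only [Hs, Th, PowerSeries.coeff_mk]
  have hr := Finset.sum_range_reflect
    (fun k => hs a k * (besselTheta (n - k) z / (Nat.factorial (n - k) : ℂ))) (n + 1)
  rw [← hr]
  apply Finset.sum_congr rfl
  intro j hj
  rw [Finset.mem_range] at hj
  rw [show n + 1 - 1 - j = n - j from by omega, show n - (n - j) = j from by omega]

end BesselAux

theorem stmt_9 (m : ℕ) (hm : 2 ≤ m) (n : ℕ) (zv : Fin m → ℂ) :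
    ∑ k ∈ Finset.Nat.antidiagonalTuple m n,
      ∏ i, besselTheta (k i) (zv i) / (Nat.factorial (k i) : ℂ) =
    ∑ k ∈ Finset.range (n + 1),
      2 ^ (n - k) * poch (((m : ℂ) - 1) / 2) (n - k) / (Nat.factorial (n - k) : ℂ) *
        (besselTheta k (∑ i, zv i) / (Nat.factorial k : ℂ)) := by
  have h := congrArg (PowerSeries.coeff (R := ℂ) n) (BesselAux.main_ps m zv)
  rw [BesselAux.coeff_prod_fin, BesselAux.coeff_Hs_mul] at h
  simp only [BesselAux.Th, PowerSeries.coeff_mk, BesselAux.hs] at h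
  exact h
end

section
/- For every integer m ≥ 2, every n ∈ ℕ, and all complex numbers z₁, …, z_m with z = z₁ + ⋯ + z_m, the Carlitz Bessel polynomials satisfy the multinomial property ∑_{k₁+⋯+k_m = n} ∏_{i=1}^{m} f_{kᵢ}(zᵢ)/kᵢ! = f_n(z)/n!, where the sum is over all m-tuples (k₁, …, k_m) of nonnegative integers summing to n. -/
/-- The Carlitz Bessel polynomials: `f₀(z) = 1` and `f_n(z) = z θ_{n-1}(z)` for `n ≥ 1`. -/
noncomputable def besselF (n : ℕ) (z : ℂ) : ℂ :=
  if n = 0 then 1 else z * besselTheta (n - 1) z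

section BesselAux
open Finset PowerSeries

noncomputable def Ecoef (n a : ℕ) : ℂ :=
  if a = 0 then (if n = 0 then 1 else 0)
  else if a ≤ n then
    (a : ℂ) * ((2*n - a - 1).factorial) / ((n-a).factorial * n.factorial * 2^(n-a))
  else 0

lemma Ecoef_eq (a d n m : ℕ) (hn : n = a+1+d) (hm : m = a + 2*d) :
    Ecoef n (a+1) = ((a:ℂ)+1) * m.factorial / (d.factorial * n.factorial * 2^d) := by
  subst hn hm
  have h1 : a + 1 ≤ a + 1 + d := by omega
  have h2 : 2*(a+1+d) - (a+1) - 1 = a + 2*d := by omega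
  have h3 : a+1+d - (a+1) = d := by omega
  simp only [Ecoef, if_neg (Nat.succ_ne_zero a), if_pos h1, h2, h3]
  push_cast
  ring

lemma Ecoef_of_gt {n a : ℕ} (h : n < a) : Ecoef n a = 0 := by
  have ha : a ≠ 0 := by omega
  simp [Ecoef, ha, Nat.not_le.mpr h]

lemma Ecoef_zero_right (n : ℕ) : Ecoef n 0 = if n = 0 then 1 else 0 := by
  simp [Ecoef]

lemma factorial_cast_ne (k : ℕ) : ((k.factorial : ℂ)) ≠ 0 :=
  Nat.cast_ne_zero.mpr k.factorial_ne_zero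

lemma Ecoef_self (n : ℕ) : Ecoef n n = 1 := by
  cases n with
  | zero => simp [Ecoef]
  | succ a =>
    rw [Ecoef_eq a 0 (a+1) a (by omega) (by omega)]
    have h4 : ((a+1).factorial : ℂ) = ((a:ℂ)+1) * a.factorial := by
      rw [Nat.factorial_succ]; push_cast; ring
    rw [h4]
    have h0 := factorial_cast_ne a
    have h3 : ((a:ℂ)+1) ≠ 0 := Nat.cast_add_one_ne_zero a
    field_simp
    simp


lemma aux_succ (b d D M F P : ℂ) (hD : D ≠ 0) (hM : M ≠ 0) (hP : P ≠ 0)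
    (hd : (d:ℂ)+1 ≠ 0) (hb : b+d+3 ≠ 0) :
    (b+1+1+1)*F / (D * ((b+d+3)*M) * P) =
      2 * ((b+1+1)*((b+2*d+3)*F) / (((d+1)*D) * ((b+d+3)*M) * (P*2)))
      - 2 * ((b+1)*F / (((d+1)*D) * M * (P*2))) := by
  have hY : ((d+1)*D) * ((b+d+3)*M) * (P*2) ≠ 0 := by
    apply mul_ne_zero (mul_ne_zero (mul_ne_zero hd hD) (mul_ne_zero hb hM))
    exact mul_ne_zero hP two_ne_zero
  have hZ : ((d+1)*D) * M * (P*2) ≠ 0 :=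
    mul_ne_zero (mul_ne_zero (mul_ne_zero hd hD) hM) (mul_ne_zero hP two_ne_zero)
  have hX : D * ((b+d+3)*M) * P ≠ 0 :=
    mul_ne_zero (mul_ne_zero hD (mul_ne_zero hb hM)) hP
  rw [mul_div_assoc', mul_div_assoc', div_sub_div _ _ hY hZ,
    div_eq_div_iff hX (mul_ne_zero hY hZ)]
  ring

lemma aux_zero (d D N F P : ℂ) (hD : D ≠ 0) (hN : N ≠ 0) (hP : P ≠ 0)
    (hd : (d:ℂ)+1 ≠ 0) :
    ((1:ℂ)+1)*F / (D * N * P) =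
      2 * ((0+1)*((2*d+2)*F) / (((d+1)*D) * N * (P*2))) - 2 * 0 := by
  have hY : ((d+1)*D) * N * (P*2) ≠ 0 :=
    mul_ne_zero (mul_ne_zero (mul_ne_zero hd hD) hN) (mul_ne_zero hP two_ne_zero)
  have hX : D * N * P ≠ 0 := mul_ne_zero (mul_ne_zero hD hN) hP
  rw [mul_zero, sub_zero, mul_div_assoc', div_eq_div_iff hX hY]
  ring

lemma Ecoef_rec (n a : ℕ) :
    Ecoef (n+1) (a+2) = 2 * Ecoef (n+1) (a+1) - 2 * Ecoef n a := by
  rcases lt_trichotomy n a with h | rfl | h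
  · rw [Ecoef_of_gt (by omega), Ecoef_of_gt (by omega), Ecoef_of_gt h]
    ring
  · rw [Ecoef_of_gt (by omega), Ecoef_self, Ecoef_self]; ring
  · obtain ⟨d, rfl⟩ : ∃ d, n = a + 1 + d := ⟨n - (a+1), by omega⟩
    have hP : (2:ℂ)^d ≠ 0 := pow_ne_zero _ two_ne_zero
    have hd : ((d:ℂ)+1) ≠ 0 := Nat.cast_add_one_ne_zero d
    have hfd := factorial_cast_ne d
    have hfd1 : ((d+1).factorial : ℂ) = ((d:ℂ)+1) * d.factorial := by
      rw [Nat.factorial_succ]; push_cast; ring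
    have hpow : ((2:ℂ)^(d+1)) = 2^d * 2 := by rw [pow_succ]
    cases a with
    | zero =>
      rw [show (0:ℕ)+2 = 1+1 by rfl,
        Ecoef_eq 1 d (0+1+d+1) (1+2*d) (by omega) (by omega),
        Ecoef_eq 0 (d+1) (0+1+d+1) (0+2*(d+1)) (by omega) (by omega)]
      rw [Ecoef_zero_right, if_neg (show (0:ℕ)+1+d ≠ 0 by omega)]
      have hm : ((0+2*(d+1)).factorial : ℂ) = (2*(d:ℂ)+2) * ((1+2*d).factorial) := by
        rw [show 0+2*(d+1) = (1+2*d)+1 by omega, Nat.factorial_succ]; push_cast; ring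
      rw [hm, hfd1, hpow]
      push_cast
      exact aux_zero (d:ℂ) _ _ _ _ hfd (factorial_cast_ne _) hP hd
    | succ b =>
      rw [show b+1+2 = (b+2)+1 by rfl,
        Ecoef_eq (b+2) d (b+1+1+d+1) (b+2*d+2) (by omega) (by omega),
        show b+1+1 = (b+1)+1 by rfl,
        Ecoef_eq (b+1) (d+1) (b+1+1+d+1) (b+2*d+3) (by omega) (by omega),
        Ecoef_eq b (d+1) (b+1+1+d) (b+2*d+2) (by omega) (by omega)]
      have hN : ((b+1+1+d+1).factorial : ℂ)
          = ((b:ℂ)+(d:ℂ)+3) * ((b+1+1+d).factorial) := by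
        rw [show b+1+1+d+1 = (b+1+1+d)+1 by omega, Nat.factorial_succ]; push_cast; ring
      have hm : ((b+2*d+3).factorial : ℂ)
          = ((b:ℂ)+2*(d:ℂ)+3) * ((b+2*d+2).factorial) := by
        rw [show b+2*d+3 = (b+2*d+2)+1 by omega, Nat.factorial_succ]; push_cast; ring
      rw [hN, hm, hfd1, hpow]
      push_cast
      exact aux_succ (b:ℂ) (d:ℂ) _ _ _ _ hfd (factorial_cast_ne _) hP hd
        (by
          have : ((b+d+3 : ℕ) : ℂ) ≠ 0 := Nat.cast_ne_zero.mpr (by omega)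
          push_cast at this; exact this)

noncomputable def cG : PowerSeries ℂ :=
  PowerSeries.mk fun n => if n = 0 then 0 else (catalan (n-1) : ℂ) / 2^(n-1)

lemma coeff_cG (n : ℕ) : PowerSeries.coeff n cG = Ecoef n 1 := by
  cases n with
  | zero => simp [cG, Ecoef_of_gt (show 0 < 1 by omega)]
  | succ k =>
    rw [Ecoef_eq 0 k (k+1) (2*k) (by omega) (by omega)]
    simp only [cG, PowerSeries.coeff_mk, if_neg (Nat.succ_ne_zero k), Nat.succ_sub_one]
    have hk1 : ((k:ℂ)+1) ≠ 0 := Nat.cast_add_one_ne_zero k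
    have hkf := factorial_cast_ne k
    have hc : ((k:ℂ)+1) * (catalan k : ℂ) * ((k.factorial : ℂ) * k.factorial)
        = ((2*k).factorial : ℂ) := by
      have h1 : (k+1) * catalan k = (2*k).choose k := by
        rw [succ_mul_catalan_eq_centralBinom]; rfl
      have h2 : ((2*k).choose k : ℂ) = ((2*k).factorial : ℂ) / (k.factorial * (2*k - k).factorial) := by
        exact Nat.cast_choose ℂ (by omega)
      rw [show 2*k - k = k by omega] at h2
      have h4 : (((k+1) * catalan k : ℕ) : ℂ) = ((2*k).choose k : ℂ) := by rw [h1]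
      push_cast at h4
      rw [h4, h2]
      field_simp
    have hfact : ((k+1).factorial : ℂ) = ((k:ℂ)+1) * k.factorial := by
      rw [Nat.factorial_succ]; push_cast; ring
    rw [hfact]
    have h2P : (2:ℂ)^k ≠ 0 := pow_ne_zero _ two_ne_zero
    rw [div_eq_div_iff h2P (mul_ne_zero (mul_ne_zero hkf (mul_ne_zero hk1 hkf)) h2P)]
    push_cast
    linear_combination ((2:ℂ)^k) * hc

lemma cG_sq : cG^2 = (2:ℂ) • cG - (2:ℂ) • (PowerSeries.X : ℂ⟦X⟧) := by
  ext n
  rw [pow_two, PowerSeries.coeff_mul, map_sub, PowerSeries.coeff_smul,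
    PowerSeries.coeff_smul, PowerSeries.coeff_X]
  rcases n with _ | n
  · simp [cG]
  rcases n with _ | k
  · simp [Finset.Nat.sum_antidiagonal_eq_sum_range_succ_mk, Finset.sum_range_succ, cG]
  · rw [Finset.Nat.sum_antidiagonal_eq_sum_range_succ_mk]
    have hstrip : ∑ i ∈ Finset.range (k+2+1),
        (PowerSeries.coeff i cG) * (PowerSeries.coeff (k+2-i) cG)
        = ∑ i ∈ Finset.range (k+1),
          (PowerSeries.coeff (i+1) cG) * (PowerSeries.coeff (k+1-i) cG) := by
      rw [Finset.sum_range_succ, Finset.sum_range_succ']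
      have c0 : PowerSeries.coeff 0 cG = 0 := by simp [cG]
      have e1 : PowerSeries.coeff (k+2-(k+2)) cG = 0 := by
        rw [show k+2-(k+2) = 0 by omega]; exact c0
      rw [c0, e1, mul_zero, zero_mul, add_zero, add_zero]
      apply Finset.sum_congr rfl
      intro i _
      rw [show k+2-(i+1) = k+1-i from by omega]
    rw [hstrip]
    have hterm : ∀ i ∈ Finset.range (k+1),
        (PowerSeries.coeff (i+1) cG) * (PowerSeries.coeff (k+1-i) cG)
        = (catalan i : ℂ) * (catalan (k-i) : ℂ) / 2^k := by
      intro i hi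
      simp only [Finset.mem_range] at hi
      have hki : k+1-i = (k-i)+1 := by omega
      rw [hki]
      simp only [cG, PowerSeries.coeff_mk, if_neg (Nat.succ_ne_zero _), Nat.succ_sub_one]
      rw [div_mul_div_comm, ← pow_add, show i+(k-i) = k from by omega]
    rw [Finset.sum_congr rfl hterm, ← Finset.sum_div]
    have hcat : ∑ i ∈ Finset.range (k+1), (catalan i : ℂ) * (catalan (k-i) : ℂ)
        = (catalan (k+1) : ℂ) := by
      rw [catalan_succ' k, Nat.sum_antidiagonal_eq_sum_range_succ_mk]
      push_cast
      rfl
    rw [hcat]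
    simp only [cG, PowerSeries.coeff_mk, if_neg (Nat.succ_ne_zero _), Nat.succ_sub_one]
    rw [if_neg (by omega : ¬ (k+2 = 1))]
    rw [pow_succ]
    simp only [smul_eq_mul, mul_zero, sub_zero]
    have h2P : (2:ℂ)^k ≠ 0 := pow_ne_zero _ two_ne_zero
    field_simp

lemma coeff_cG_pow : ∀ a n, PowerSeries.coeff n (cG ^ a) = Ecoef n a
  | 0, n => by
    rw [pow_zero, Ecoef_zero_right]
    simp [PowerSeries.coeff_one]
  | 1, n => by simpa using coeff_cG n
  | (a+2), n => by
    have h2 : cG^(a+2) = (2:ℂ) • cG^(a+1) - (2:ℂ) • (PowerSeries.X * cG^a) := by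
      have : cG^(a+2) = cG^a * cG^2 := by ring
      rw [this, cG_sq, mul_sub, mul_smul_comm, mul_smul_comm, ← pow_succ]
      congr 2
      ring
    rw [h2, map_sub, PowerSeries.coeff_smul, PowerSeries.coeff_smul]
    cases n with
    | zero =>
      rw [PowerSeries.coeff_zero_eq_constantCoeff, map_mul, PowerSeries.constantCoeff_X,
        zero_mul, ← PowerSeries.coeff_zero_eq_constantCoeff, coeff_cG_pow (a+1) 0]
      rw [Ecoef_of_gt (by omega), Ecoef_of_gt (by omega)]
      simp
    | succ n =>
      rw [PowerSeries.coeff_succ_X_mul, coeff_cG_pow (a+1) (n+1), coeff_cG_pow a n,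
        Ecoef_rec n a]
      simp [smul_eq_mul]

lemma besselF_div_eq (n : ℕ) (z : ℂ) :
    besselF n z / (n.factorial : ℂ)
      = ∑ a ∈ Finset.range (n+1), Ecoef n a / (a.factorial : ℂ) * z ^ a := by
  cases n with
  | zero => simp [besselF, Ecoef_zero_right]
  | succ N =>
    rw [Finset.sum_range_succ']
    rw [Ecoef_zero_right, if_neg (Nat.succ_ne_zero N)]
    simp only [zero_div, zero_mul, add_zero]
    rw [besselF, if_neg (Nat.succ_ne_zero N), Nat.succ_sub_one, besselTheta, besselQ]
    rw [Finset.mul_sum, Finset.mul_sum, Finset.sum_div]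
    apply Finset.sum_congr rfl
    intro l hl
    simp only [Finset.mem_range] at hl
    have hlN : l ≤ N := by omega
    rw [Ecoef_eq l (N-l) (N+1) (2*N-l) (by omega) (by omega)]
    rw [Nat.cast_choose ℂ hlN, Nat.cast_choose ℂ (show l ≤ 2*N by omega)]
    have e1 : ((2*N - l : ℕ) : ℂ) = ((2*N-l).factorial : ℂ) / ((2*N-l).factorial : ℂ) * (2*N-l : ℕ) := by
      rw [div_self (factorial_cast_ne _), one_mul]
    have hfl1 : ((l+1).factorial : ℂ) = ((l:ℂ)+1) * l.factorial := by
      rw [Nat.factorial_succ]; push_cast; ring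
    have hNl : N - l ≤ N := by omega
    have hp : (2:ℂ)^N = 2^l * 2^(N-l) := by
      rw [← pow_add, show l+(N-l) = N from by omega]
    have hmp : (2*z)^l = 2^l * z^l := mul_pow 2 z l
    rw [hfl1, hp, hmp]
    have h1 := factorial_cast_ne l
    have h2 := factorial_cast_ne (N-l)
    have h3 := factorial_cast_ne N
    have h4 := factorial_cast_ne (N+1)
    have h5 := factorial_cast_ne (2*N)
    have h6 := factorial_cast_ne (2*N-l)
    have h7 : (2:ℂ)^l ≠ 0 := pow_ne_zero _ two_ne_zero
    have h8 : (2:ℂ)^(N-l) ≠ 0 := pow_ne_zero _ two_ne_zero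
    have h9 : ((l:ℂ)+1) ≠ 0 := Nat.cast_add_one_ne_zero l
    generalize hu : (2:ℂ)^l = u at h7 ⊢
    generalize hv : (2:ℂ)^(N-l) = v at h8 ⊢
    field_simp [h1, h2, h3, h4, h5, h6, h7, h8, h9]
    ring

lemma Ecoef_conv (n a b : ℕ) :
    ∑ p ∈ Finset.HasAntidiagonal.antidiagonal n, Ecoef p.1 a * Ecoef p.2 b = Ecoef n (a+b) := by
  rw [← coeff_cG_pow (a+b) n, pow_add, PowerSeries.coeff_mul]
  apply Finset.sum_congr rfl
  intro p _
  rw [coeff_cG_pow, coeff_cG_pow]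

lemma besselF_div_eq' (k n : ℕ) (h : k ≤ n) (z : ℂ) :
    besselF k z / (k.factorial : ℂ)
      = ∑ a ∈ Finset.range (n+1), Ecoef k a / (a.factorial : ℂ) * z ^ a := by
  rw [besselF_div_eq]
  apply Finset.sum_subset (Finset.range_subset_range.mpr (by omega))
  intro a ha hka
  simp only [Finset.mem_range] at ha hka
  rw [Ecoef_of_gt (by omega), zero_div, zero_mul]

lemma besselF_conv (n : ℕ) (x y : ℂ) :
    ∑ p ∈ Finset.HasAntidiagonal.antidiagonal n,
      (besselF p.1 x / (p.1.factorial : ℂ)) * (besselF p.2 y / (p.2.factorial : ℂ))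
      = besselF n (x+y) / (n.factorial : ℂ) := by
  have key : ∀ p ∈ Finset.HasAntidiagonal.antidiagonal n,
      (besselF p.1 x / (p.1.factorial : ℂ)) * (besselF p.2 y / (p.2.factorial : ℂ))
      = ∑ a ∈ Finset.range (n+1), ∑ b ∈ Finset.range (n+1),
          (Ecoef p.1 a * Ecoef p.2 b) * (x ^ a / a.factorial * (y ^ b / b.factorial)) := by
    intro p hp
    simp only [Finset.HasAntidiagonal.mem_antidiagonal] at hp
    rw [besselF_div_eq' p.1 n (by omega) x, besselF_div_eq' p.2 n (by omega) y,
      Finset.sum_mul_sum]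
    apply Finset.sum_congr rfl; intro a _
    apply Finset.sum_congr rfl; intro b _
    ring
  rw [Finset.sum_congr rfl key]
  rw [Finset.sum_comm]
  have step2 : ∀ a ∈ Finset.range (n+1),
      ∑ p ∈ Finset.HasAntidiagonal.antidiagonal n, ∑ b ∈ Finset.range (n+1),
        (Ecoef p.1 a * Ecoef p.2 b) * (x ^ a / a.factorial * (y ^ b / b.factorial))
      = ∑ b ∈ Finset.range (n+1),
          Ecoef n (a+b) * (x ^ a / a.factorial * (y ^ b / b.factorial)) := by
    intro a _
    rw [Finset.sum_comm]
    apply Finset.sum_congr rfl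
    intro b _
    rw [← Finset.sum_mul, Ecoef_conv]
  rw [Finset.sum_congr rfl step2]
  -- now the RHS
  rw [besselF_div_eq' n n le_rfl (x+y)]
  have expand : ∀ c ∈ Finset.range (n+1),
      Ecoef n c / (c.factorial : ℂ) * (x+y) ^ c
      = ∑ j ∈ Finset.range (c+1),
          Ecoef n c * (x ^ j / j.factorial * (y ^ (c-j) / (c-j).factorial)) := by
    intro c _
    rw [add_pow, Finset.mul_sum]
    apply Finset.sum_congr rfl
    intro j hj
    simp only [Finset.mem_range] at hj
    rw [Nat.cast_choose ℂ (show j ≤ c by omega)]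
    have h1 := factorial_cast_ne j
    have h2 := factorial_cast_ne (c-j)
    have h3 := factorial_cast_ne c
    field_simp
  rw [Finset.sum_congr rfl expand]
  -- reindex
  rw [Finset.sum_sigma' (Finset.range (n+1)) (fun c => Finset.range (c+1))
    (fun c j => Ecoef n c * (x ^ j / (j.factorial : ℂ) * (y ^ (c-j) / ((c-j).factorial : ℂ))))]
  rw [← Finset.sum_product' (f := fun a b =>
      Ecoef n (a+b) * (x ^ a / (a.factorial : ℂ) * (y ^ b / (b.factorial : ℂ))))]
  rw [← Finset.sum_filter_of_ne (s := Finset.range (n+1) ×ˢ Finset.range (n+1))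
    (p := fun q => q.1 + q.2 ≤ n) (f := fun q =>
      Ecoef n (q.1+q.2) * (x ^ q.1 / (q.1.factorial : ℂ) * (y ^ q.2 / (q.2.factorial : ℂ))))
    (by
      intro q _ hq
      by_contra hle
      exact hq (by
        show Ecoef n (q.1+q.2) * (x ^ q.1 / (q.1.factorial : ℂ) * (y ^ q.2 / (q.2.factorial : ℂ))) = 0
        rw [Ecoef_of_gt (show n < q.1+q.2 by omega)]; ring))]
  · apply Finset.sum_nbij' (i := fun q => (⟨q.1 + q.2, q.1⟩ : Σ _ : ℕ, ℕ))
      (j := fun s => (s.2, s.1 - s.2))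
    · intro q hq
      simp only [Finset.mem_filter, Finset.mem_product, Finset.mem_range] at hq
      simp only [Finset.mem_sigma, Finset.mem_range]
      omega
    · intro s hs
      simp only [Finset.mem_sigma, Finset.mem_range] at hs
      simp only [Finset.mem_filter, Finset.mem_product, Finset.mem_range]
      omega
    · intro q hq
      simp
    · intro s hs
      simp only [Finset.mem_sigma, Finset.mem_range] at hs
      ext
      · simp; omega
      · simp
    · intro q hq
      show Ecoef n (q.1 + q.2) * (x ^ q.1 / (q.1.factorial : ℂ) * (y ^ q.2 / (q.2.factorial : ℂ)))
        = Ecoef n (q.1 + q.2) * (x ^ q.1 / (q.1.factorial : ℂ)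
            * (y ^ (q.1+q.2-q.1) / ((q.1+q.2-q.1).factorial : ℂ)))
      rw [show q.1+q.2-q.1 = q.2 from by omega]

lemma besselF_multinomial : ∀ (m n : ℕ) (zv : Fin m → ℂ),
    ∑ k ∈ Finset.Nat.antidiagonalTuple m n,
      ∏ i, besselF (k i) (zv i) / (Nat.factorial (k i) : ℂ)
    = besselF n (∑ i, zv i) / (Nat.factorial n : ℂ) := by
  intro m
  induction m with
  | zero =>
    intro n zv
    cases n with
    | zero => simp [Finset.Nat.antidiagonalTuple_zero_zero, besselF]
    | succ n =>
      rw [Finset.Nat.antidiagonalTuple_zero_succ]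
      simp [besselF, Nat.succ_ne_zero]
  | succ m ih =>
    intro n zv
    have hsplit : ∑ k ∈ Finset.Nat.antidiagonalTuple (m+1) n,
        ∏ i, besselF (k i) (zv i) / (Nat.factorial (k i) : ℂ)
      = ∑ p ∈ Finset.HasAntidiagonal.antidiagonal n, ∑ t ∈ Finset.Nat.antidiagonalTuple m p.2,
          (besselF p.1 (zv 0) / (Nat.factorial p.1 : ℂ)) *
          ∏ i, besselF (t i) (zv i.succ) / (Nat.factorial (t i) : ℂ) := by
      rw [Finset.sum_sigma' (Finset.HasAntidiagonal.antidiagonal n)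
        (fun p => Finset.Nat.antidiagonalTuple m p.2)
        (fun p t => (besselF p.1 (zv 0) / (Nat.factorial p.1 : ℂ)) *
          ∏ i, besselF (t i) (zv i.succ) / (Nat.factorial (t i) : ℂ))]
      apply Finset.sum_nbij'
        (i := fun k => (⟨(k 0, n - k 0), Fin.tail k⟩ : Σ _ : ℕ × ℕ, (Fin m → ℕ)))
        (j := fun s => Fin.cons s.1.1 s.2)
      · intro k hk
        rw [Finset.Nat.mem_antidiagonalTuple, Fin.sum_univ_succ] at hk
        simp only [Finset.mem_sigma, Finset.HasAntidiagonal.mem_antidiagonal,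
          Finset.Nat.mem_antidiagonalTuple]
        constructor
        · omega
        · show ∑ i : Fin m, k i.succ = n - k 0
          omega
      · intro s hs
        simp only [Finset.mem_sigma, Finset.HasAntidiagonal.mem_antidiagonal,
          Finset.Nat.mem_antidiagonalTuple] at hs
        rw [Finset.Nat.mem_antidiagonalTuple, Fin.sum_cons, hs.2]
        omega
      · intro k hk
        exact Fin.cons_self_tail k
      · intro s hs
        simp only [Finset.mem_sigma, Finset.HasAntidiagonal.mem_antidiagonal,
          Finset.Nat.mem_antidiagonalTuple] at hs
        obtain ⟨⟨a, b⟩, t⟩ := s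
        obtain ⟨h1, -⟩ := hs
        simp only at h1
        simp only [Fin.cons_zero, Fin.tail_cons]
        rw [show n - a = b from by omega]
      · intro k hk
        rw [Fin.prod_univ_succ]
        rfl
    rw [hsplit]
    have hinner : ∀ p ∈ Finset.HasAntidiagonal.antidiagonal n,
        ∑ t ∈ Finset.Nat.antidiagonalTuple m p.2,
          (besselF p.1 (zv 0) / (Nat.factorial p.1 : ℂ)) *
          ∏ i, besselF (t i) (zv i.succ) / (Nat.factorial (t i) : ℂ)
        = (besselF p.1 (zv 0) / (Nat.factorial p.1 : ℂ)) *
          (besselF p.2 (∑ i : Fin m, zv i.succ) / (Nat.factorial p.2 : ℂ)) := by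
      intro p _
      rw [← Finset.mul_sum, ih p.2 (fun i => zv i.succ)]
    rw [Finset.sum_congr rfl hinner,
      besselF_conv n (zv 0) (∑ i : Fin m, zv i.succ), ← Fin.sum_univ_succ]


end BesselAux

theorem stmt_11 (m : ℕ) (hm : 2 ≤ m) (n : ℕ) (zv : Fin m → ℂ) :
    ∑ k ∈ Finset.Nat.antidiagonalTuple m n,
      ∏ i, besselF (k i) (zv i) / (Nat.factorial (k i) : ℂ) =
    besselF n (∑ i, zv i) / (Nat.factorial n : ℂ) :=
  besselF_multinomial m n zv
end

section
/- For every n ∈ ℕ and every complex z, the Bessel polynomial q_n is related to the generalized Laguerre polynomial by q_n(z) = ((-1)ⁿ / C(2n, n)) · L_n^{(-2n-1)}(2z). -/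
/-- The generalized Laguerre polynomial
`L_n^{(α)}(x) = ∑_{k=0}^n [(α+k+1)_{n-k} / ((n-k)! k!)] (-x)^k`. -/
noncomputable def laguerre (α : ℂ) (n : ℕ) (x : ℂ) : ℂ :=
  ∑ k ∈ Finset.range (n + 1),
    poch (α + k + 1) (n - k) / ((Nat.factorial (n - k) : ℂ) * (Nat.factorial k : ℂ)) * (-x) ^ k

lemma poch_key (n l : ℕ) (hl : l ≤ n) :
    poch (-(2 * (n : ℂ)) - 1 + l + 1) (n - l)
      = (-1) ^ (n - l) * ((2 * n - l).factorial : ℂ) / (n.factorial : ℂ) := by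
  have hd : (n.factorial) * (2 * n - l).descFactorial (n - l) = (2 * n - l).factorial := by
    have h := Nat.factorial_mul_descFactorial (show n - l ≤ 2 * n - l by omega)
    rwa [show 2 * n - l - (n - l) = n by omega] at h
  unfold poch
  have step1 : ∀ i ∈ Finset.range (n - l),
      (-(2 * (n : ℂ)) - 1 + l + 1 + i) = (-1) * ((2 * n - l - i : ℕ) : ℂ) := by
    intro i hi
    rw [Finset.mem_range] at hi
    rw [show 2 * n - l - i = 2 * n - (l + i) by omega,
      Nat.cast_sub (by omega : l + i ≤ 2 * n)]
    push_cast
    ring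
  rw [Finset.prod_congr rfl step1, Finset.prod_mul_distrib, Finset.prod_const]
  have step2 : (∏ i ∈ Finset.range (n - l), ((2 * n - l - i : ℕ) : ℂ))
      = (((2 * n - l).descFactorial (n - l) : ℕ) : ℂ) := by
    rw [Nat.descFactorial_eq_prod_range, Nat.cast_prod]
  rw [step2]
  have hfn : ((n.factorial : ℂ)) ≠ 0 := by exact_mod_cast n.factorial_ne_zero
  have hdc : ((n.factorial : ℂ)) * (((2 * n - l).descFactorial (n - l) : ℕ) : ℂ)
      = ((2 * n - l).factorial : ℂ) := by
    exact_mod_cast congrArg (Nat.cast : ℕ → ℂ) hd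
  field_simp
  simp only [Finset.card_range]
  linear_combination (-1 : ℂ) ^ (n - l) * hdc

theorem stmt_12 (n : ℕ) (z : ℂ) :
    besselQ n z = ((-1 : ℂ) ^ n / (((2 * n).choose n : ℕ) : ℂ)) *
      laguerre (-(2 * (n : ℂ)) - 1) n (2 * z) := by
  unfold besselQ laguerre
  rw [Finset.mul_sum]
  refine Finset.sum_congr rfl fun l hl => ?_
  rw [Finset.mem_range, Nat.lt_succ_iff] at hl
  rw [poch_key n l hl]
  have hl2 : l ≤ 2 * n := by omega
  have hsign : (-1 : ℂ) ^ (n - l) * (-1) ^ l = (-1) ^ n := by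
    rw [← pow_add, Nat.sub_add_cancel hl]
  have hc1 : ((n.choose l : ℂ)) * (l.factorial : ℂ) * ((n - l).factorial : ℂ) = (n.factorial : ℂ) := by
    exact_mod_cast congrArg (Nat.cast : ℕ → ℂ) (Nat.choose_mul_factorial_mul_factorial hl)
  have hc2 : (((2 * n).choose l : ℂ)) * (l.factorial : ℂ) * ((2 * n - l).factorial : ℂ) = ((2 * n).factorial : ℂ) := by
    exact_mod_cast congrArg (Nat.cast : ℕ → ℂ) (Nat.choose_mul_factorial_mul_factorial hl2)
  have hc3 : (((2 * n).choose n : ℂ)) * (n.factorial : ℂ) * (n.factorial : ℂ) = ((2 * n).factorial : ℂ) := by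
    have h := Nat.choose_mul_factorial_mul_factorial (show n ≤ 2 * n by omega)
    rw [show 2 * n - n = n by omega] at h
    exact_mod_cast congrArg (Nat.cast : ℕ → ℂ) h
  have f0 : ∀ m : ℕ, ((m.factorial : ℂ)) ≠ 0 := fun m => by
    exact_mod_cast m.factorial_ne_zero
  have h1 : (((2 * n).choose l : ℂ)) ≠ 0 := by exact_mod_cast (Nat.choose_pos hl2).ne'
  have h2 : (((2 * n).choose n : ℂ)) ≠ 0 := by
    exact_mod_cast (Nat.choose_pos (show n ≤ 2 * n by omega)).ne'
  have hs2 : (-1 : ℂ) ^ (n - l) = (-1) ^ n * (-1) ^ l := by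
    rw [← hsign, mul_assoc, ← pow_add, ← two_mul, pow_mul, neg_one_sq, one_pow, mul_one]
  rw [neg_pow (2 * z) l, hs2]
  have e1 : (-1 : ℂ) ^ l * (-1) ^ l = 1 := by
    rw [← pow_add, ← two_mul, pow_mul, neg_one_sq, one_pow]
  have e2 : (-1 : ℂ) ^ n * (-1) ^ n = 1 := by
    rw [← pow_add, ← two_mul, pow_mul, neg_one_sq, one_pow]
  field_simp [h1, h2, f0 l, f0 n, f0 (n - l), f0 (2 * n - l)]
  apply mul_left_cancel₀ (f0 l)
  linear_combination (2*z)^l * (((2*n).choose n : ℂ) * (n.factorial : ℂ)) * hc1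
    + (2*z)^l * hc3 - (2*z)^l * hc2
    - ((-1:ℂ)^l * (-1)^l * ((2*n-l).factorial : ℂ) * (2*z)^l * (((2*n).choose l : ℂ)) * (l.factorial : ℂ)) * e2
    - (((2*n-l).factorial : ℂ) * (2*z)^l * (((2*n).choose l : ℂ)) * (l.factorial : ℂ)) * e1
end

section
/- For every n ∈ ℕ and every complex z, ∑_{k=0}^{n} L_k^{(-2k-1)}(z) · L_{n-k}^{(-2n+2k-1)}(-z) = (-4)ⁿ. -/
open Finset

/-! Auxiliary combinatorics: `AA a m = C(2m+a, m)` and its convolution `SS`. -/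

private def AA (a m : ℕ) : ℕ := (2*m + a).choose m

private def SS (a b q : ℕ) : ℕ := ∑ m ∈ range (q+1), AA a m * AA b (q - m)

private lemma AA_zero (a : ℕ) : AA a 0 = 1 := by simp [AA]

private lemma AA_rec (a m : ℕ) : AA (a+1) (m+1) = AA a (m+1) + AA (a+2) m := by
  have h : 2*(m+1) + (a+1) = (2*m + (a+2)) + 1 := by ring
  have h2 : 2*(m+1) + a = 2*m + (a+2) := by ring
  simp only [AA, h, Nat.choose_succ_succ, h2, Nat.succ_eq_add_one]
  omega

private lemma split_left (a b q : ℕ) : SS (a+1) b (q+1) = SS a b (q+1) + SS (a+2) b q := by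
  have e1 : SS (a+1) b (q+1)
      = (∑ m ∈ range (q+1), AA (a+1) (m+1) * AA b (q - m)) + AA (a+1) 0 * AA b (q+1) := by
    rw [SS, Finset.sum_range_succ']
    simp [Nat.succ_sub_succ]
  have e2 : SS a b (q+1)
      = (∑ m ∈ range (q+1), AA a (m+1) * AA b (q - m)) + AA a 0 * AA b (q+1) := by
    rw [SS, Finset.sum_range_succ']
    simp [Nat.succ_sub_succ]
  rw [e1, e2, AA_zero, AA_zero]
  have : ∀ m ∈ range (q+1), AA (a+1) (m+1) * AA b (q - m)
      = AA a (m+1) * AA b (q - m) + AA (a+2) m * AA b (q - m) := by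
    intro m _; rw [AA_rec, add_mul]
  rw [Finset.sum_congr rfl this, Finset.sum_add_distrib]
  rw [SS]
  ring

private lemma split_right (a b q : ℕ) : SS a (b+1) (q+1) = SS a b (q+1) + SS a (b+2) q := by
  have e1 : SS a (b+1) (q+1)
      = (∑ m ∈ range (q+1), AA a m * AA (b+1) (q+1-m)) + AA a (q+1) * AA (b+1) 0 := by
    rw [SS, Finset.sum_range_succ]; simp
  have e2 : SS a b (q+1)
      = (∑ m ∈ range (q+1), AA a m * AA b (q+1-m)) + AA a (q+1) * AA b 0 := by
    rw [SS, Finset.sum_range_succ]; simp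
  rw [e1, e2, AA_zero, AA_zero]
  have : ∀ m ∈ range (q+1), AA a m * AA (b+1) (q+1-m)
      = AA a m * AA b (q+1-m) + AA a m * AA (b+2) (q-m) := by
    intro m hm
    simp only [mem_range] at hm
    have h : q + 1 - m = (q - m) + 1 := by omega
    rw [h, AA_rec, mul_add]
  rw [Finset.sum_congr rfl this, Finset.sum_add_distrib]
  rw [SS]
  ring

private lemma SS_shift : ∀ q a b, SS (a+1) b q = SS a (b+1) q := by
  intro q
  induction q with
  | zero => intro a b; simp [SS, AA_zero]
  | succ q ih =>
      intro a b
      rw [split_left, split_right, ih (a+1) b, ih a (b+1)]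

private lemma SS_reduce (a b q : ℕ) : SS a b q = SS 0 (a+b) q := by
  induction a generalizing b with
  | zero => rw [Nat.zero_add]
  | succ a ih => rw [SS_shift, ih (b+1)]; congr 1; omega

private def WW (q : ℕ) : ℕ := ∑ m ∈ range (q+1), m * (AA 0 m * AA 0 (q - m))

private lemma AA_zero_eq (m : ℕ) : AA 0 m = Nat.centralBinom m := rfl

private lemma WW_eq (q : ℕ) : 2 * WW q = q * SS 0 0 q := by
  rw [two_mul, WW]
  nth_rewrite 1 [← Finset.sum_range_reflect]
  rw [← Finset.sum_add_distrib, SS, Finset.mul_sum]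
  apply Finset.sum_congr rfl
  intro m hm
  simp only [mem_range] at hm
  have h1 : q + 1 - 1 - m = q - m := by omega
  have h2 : q - (q - m) = m := by omega
  rw [h1, h2, mul_comm (AA 0 (q-m)) (AA 0 m), ← add_mul]
  congr 1
  omega

private lemma WW_succ (q : ℕ) : WW (q+1) = (2*q+2) * SS 0 0 q := by
  have key : 2 * WW (q+1) = 2 * ((2*q+2) * SS 0 0 q) := by
    rw [WW, Finset.sum_range_succ']
    simp only [Nat.succ_sub_succ, Nat.zero_mul, add_zero]
    have step : ∀ m ∈ range (q+1), (m+1) * (AA 0 (m+1) * AA 0 (q - m))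
        = (2*(2*m+1)*AA 0 m) * AA 0 (q - m) := by
      intro m _
      rw [← mul_assoc, AA_zero_eq, AA_zero_eq, AA_zero_eq,
        Nat.succ_mul_centralBinom_succ]
    rw [Finset.sum_congr rfl step]
    have expand : ∀ m ∈ range (q+1), (2*(2*m+1)*AA 0 m) * AA 0 (q - m)
        = 4 * (m * (AA 0 m * AA 0 (q-m))) + 2 * (AA 0 m * AA 0 (q-m)) := by
      intro m _; ring
    rw [Finset.sum_congr rfl expand, Finset.sum_add_distrib, ← Finset.mul_sum,
      ← Finset.mul_sum, ← WW, ← SS]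
    have h4 : 4 * WW q = 2 * (q * SS 0 0 q) := by
      rw [← WW_eq]; ring
    rw [mul_add, h4]
    ring
  omega

private lemma SS_diag (q : ℕ) : SS 0 0 q = 4^q := by
  induction q with
  | zero => simp [SS, AA]
  | succ q ih =>
      have h1 := WW_eq (q+1)
      have h2 := WW_succ q
      have key : (q+1) * SS 0 0 (q+1) = (q+1) * (4 * SS 0 0 q) := by
        rw [← h1, h2]; ring
      have h3 : SS 0 0 (q+1) = 4 * SS 0 0 q := Nat.eq_of_mul_eq_mul_left (by omega) key
      rw [h3, ih]
      ring

/-! Reduction of `laguerre (-2k-1) k`. -/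

private lemma poch_neg (N : ℕ) : ∀ d, d ≤ N →
    poch (-(N:ℂ)) d = (-1)^d * (N.factorial : ℂ) / ((N - d).factorial : ℂ) := by
  intro d
  induction d with
  | zero =>
      intro _
      simp only [poch, Finset.range_zero, Finset.prod_empty, pow_zero, Nat.sub_zero, one_mul]
      rw [div_self (by exact_mod_cast Nat.factorial_ne_zero N)]
  | succ d ih =>
      intro hd
      have hd' : d ≤ N := by omega
      rw [poch, Finset.prod_range_succ, ← poch, ih hd']
      have e1 : (-(N:ℂ) + d) = -(((N - d : ℕ) : ℂ)) := by
        push_cast [Nat.cast_sub hd']; ring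
      have e2 : (N - d).factorial = (N - d) * (N - (d+1)).factorial := by
        have h : N - d = (N - (d+1)) + 1 := by omega
        rw [h, Nat.factorial_succ]
      have hnz1 : ((N - d : ℕ) : ℂ) ≠ 0 := by
        exact_mod_cast Nat.cast_ne_zero.mpr (by omega : N - d ≠ 0)
      have hnz2 : ((N - (d+1)).factorial : ℂ) ≠ 0 := by
        exact_mod_cast Nat.cast_ne_zero.mpr (Nat.factorial_ne_zero _)
      rw [e1, e2, Nat.cast_mul]
      set M : ℂ := ((N - d : ℕ) : ℂ) with hM
      set F : ℂ := ((N - (d+1)).factorial : ℂ) with hF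
      clear_value M F
      clear e1 e2 ih hd hd' hM hF
      field_simp
      ring

private noncomputable def gg (k : ℕ) (x : ℂ) : ℂ :=
  ∑ j ∈ Finset.range (k+1), (AA j (k-j) : ℂ) * x^j / (Nat.factorial j : ℂ)

private lemma lag_eq (k : ℕ) (x : ℂ) :
    laguerre (-(2*(k:ℂ)) - 1) k x = (-1)^k * gg k x := by
  rw [laguerre, gg, Finset.mul_sum]
  apply Finset.sum_congr rfl
  intro j hj
  simp only [Finset.mem_range] at hj
  have hjk : j ≤ k := by omega
  have e1 : (-(2*(k:ℂ)) - 1) + j + 1 = -(((2*k - j : ℕ)) : ℂ) := by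
    push_cast [Nat.cast_sub (by omega : j ≤ 2*k)]; ring
  rw [e1, poch_neg (2*k - j) (k - j) (by omega)]
  have e2 : (2*k - j) - (k - j) = k := by omega
  rw [e2]
  have hch : (AA j (k-j) : ℂ) * ((k-j).factorial * k.factorial) = ((2*k - j).factorial : ℂ) := by
    have h1 : 2*(k-j) + j = 2*k - j := by omega
    have h2 : (2*k - j) - (k - j) = k := by omega
    have h := Nat.choose_mul_factorial_mul_factorial (by omega : k - j ≤ 2*k - j)
    rw [h2] at h
    have h' : (2*k - j).choose (k-j) * ((k-j).factorial * k.factorial) = (2*k-j).factorial := by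
      rw [← mul_assoc]; exact h
    rw [AA, h1]
    exact_mod_cast congrArg (Nat.cast : ℕ → ℂ) h'
  have hsgn : ((-1:ℂ))^(k-j) * (-1)^j = (-1)^k := by
    rw [← pow_add]; congr 1; omega
  have hx : (-x)^j = (-1)^j * x^j := by rw [neg_pow]
  have hf1 : ((k-j).factorial : ℂ) ≠ 0 := by exact_mod_cast Nat.factorial_ne_zero _
  have hf2 : (k.factorial : ℂ) ≠ 0 := by exact_mod_cast Nat.factorial_ne_zero _
  have hf3 : ((j).factorial : ℂ) ≠ 0 := by exact_mod_cast Nat.factorial_ne_zero _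
  rw [← hch, hx]
  field_simp
  rw [← hsgn]
  ring

/-! Reindexing of the triple sum. -/

private lemma reindex (n : ℕ) (f : ℕ → ℕ → ℕ → ℕ → ℂ) :
    ∑ k ∈ range (n+1), ∑ j ∈ range (k+1), ∑ i ∈ range (n-k+1),
      f j (k-j) i (n-k-i)
    = ∑ p ∈ range (n+1), ∑ j ∈ range (p+1), ∑ m ∈ range (n-p+1),
      f j m (p-j) (n-p-m) := by
  have L : ∑ k ∈ range (n+1), ∑ j ∈ range (k+1), ∑ i ∈ range (n-k+1),
      f j (k-j) i (n-k-i)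
      = ∑ x ∈ (range (n+1)).sigma (fun k => range (k+1) ×ˢ range (n-k+1)),
          f x.2.1 (x.1 - x.2.1) x.2.2 (n - x.1 - x.2.2) := by
    symm
    rw [Finset.sum_sigma]
    exact Finset.sum_congr rfl fun k _ => Finset.sum_product ..
  have R : ∑ p ∈ range (n+1), ∑ j ∈ range (p+1), ∑ m ∈ range (n-p+1),
      f j m (p-j) (n-p-m)
      = ∑ x ∈ (range (n+1)).sigma (fun p => range (p+1) ×ˢ range (n-p+1)),
          f x.2.1 x.2.2 (x.1 - x.2.1) (n - x.1 - x.2.2) := by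
    symm
    rw [Finset.sum_sigma]
    exact Finset.sum_congr rfl fun p _ => Finset.sum_product ..
  rw [L, R]
  apply Finset.sum_nbij' (i := fun x => ⟨x.2.1 + x.2.2, (x.2.1, x.1 - x.2.1)⟩)
    (j := fun x => ⟨x.2.1 + x.2.2, (x.2.1, x.1 - x.2.1)⟩)
  · rintro ⟨k, j, i⟩ hx
    simp only [Finset.mem_sigma, Finset.mem_product, Finset.mem_range] at hx ⊢
    omega
  · rintro ⟨p, j, m⟩ hx
    simp only [Finset.mem_sigma, Finset.mem_product, Finset.mem_range] at hx ⊢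
    omega
  · rintro ⟨k, j, i⟩ hx
    simp only [Finset.mem_sigma, Finset.mem_product, Finset.mem_range] at hx
    have h1 : j + (k - j) = k := by omega
    have h2 : j + i - j = i := by omega
    simp [h1, h2]
  · rintro ⟨p, j, m⟩ hx
    simp only [Finset.mem_sigma, Finset.mem_product, Finset.mem_range] at hx
    have h1 : j + (p - j) = p := by omega
    have h2 : j + m - j = m := by omega
    simp [h1, h2]
  · rintro ⟨k, j, i⟩ hx
    simp only [Finset.mem_sigma, Finset.mem_product, Finset.mem_range] at hx
    have h3 : j + i - j = i := by omega
    have h4 : n - (j + i) - (k - j) = n - k - i := by omega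
    simp [h3, h4]

/-! The main convolution identity for `gg`. -/

private lemma main_sum (n : ℕ) (z : ℂ) :
    ∑ k ∈ range (n+1), gg k z * gg (n-k) (-z) = 4^n := by
  have expand : ∀ k ∈ range (n+1), gg k z * gg (n-k) (-z)
      = ∑ j ∈ range (k+1), ∑ i ∈ range (n-k+1),
          ((AA j (k-j) : ℂ) * z^j / (Nat.factorial j : ℂ)) *
          ((AA i (n-k-i) : ℂ) * (-z)^i / (Nat.factorial i : ℂ)) := by
    intro k _
    rw [gg, gg, Finset.sum_mul_sum]
  rw [Finset.sum_congr rfl expand]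
  rw [reindex n (fun j m i r =>
    ((AA j m : ℂ) * z^j / (Nat.factorial j : ℂ)) *
    ((AA i r : ℂ) * (-z)^i / (Nat.factorial i : ℂ)))]
  have step2 : ∀ p ∈ range (n+1),
      (∑ j ∈ range (p+1), ∑ m ∈ range (n-p+1),
        ((AA j m : ℂ) * z^j / (Nat.factorial j : ℂ)) *
        ((AA (p-j) (n-p-m) : ℂ) * (-z)^(p-j) / (Nat.factorial (p-j) : ℂ)))
      = (SS 0 p (n-p) : ℂ) * (0:ℂ)^p / (Nat.factorial p : ℂ) := by
    intro p hp
    simp only [mem_range] at hp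
    have inner : ∀ j ∈ range (p+1),
        (∑ m ∈ range (n-p+1),
          ((AA j m : ℂ) * z^j / (Nat.factorial j : ℂ)) *
          ((AA (p-j) (n-p-m) : ℂ) * (-z)^(p-j) / (Nat.factorial (p-j) : ℂ)))
        = (z^j / (Nat.factorial j : ℂ) * ((-z)^(p-j) / (Nat.factorial (p-j) : ℂ)))
            * (SS 0 p (n-p) : ℂ) := by
      intro j hj
      simp only [mem_range] at hj
      have hS : (SS j (p-j) (n-p) : ℂ) = (SS 0 p (n-p) : ℂ) := by
        rw [SS_reduce]
        congr 2
        omega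
      rw [← hS, SS, Nat.cast_sum, Finset.mul_sum]
      apply Finset.sum_congr rfl
      intro m _
      push_cast
      ring
    rw [Finset.sum_congr rfl inner, ← Finset.sum_mul]
    have hfp : (p.factorial : ℂ) ≠ 0 := by exact_mod_cast Nat.factorial_ne_zero _
    have hz : (0:ℂ)^p = ∑ j ∈ range (p+1), z^j * (-z)^(p-j) * (p.choose j : ℂ) := by
      rw [show (0:ℂ) = z + -z by ring, add_pow]
    have hsum : (∑ j ∈ range (p+1),
        z^j / (Nat.factorial j : ℂ) * ((-z)^(p-j) / (Nat.factorial (p-j) : ℂ)))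
        = (0:ℂ)^p / (Nat.factorial p : ℂ) := by
      rw [hz, Finset.sum_div]
      apply Finset.sum_congr rfl
      intro j hj
      simp only [mem_range] at hj
      have hjp : j ≤ p := by omega
      rw [Nat.cast_choose ℂ hjp]
      have hf1 : ((j).factorial : ℂ) ≠ 0 := by exact_mod_cast Nat.factorial_ne_zero _
      have hf2 : ((p-j).factorial : ℂ) ≠ 0 := by exact_mod_cast Nat.factorial_ne_zero _
      field_simp
    rw [hsum]
    ring
  rw [Finset.sum_congr rfl step2]
  rw [Finset.sum_eq_single_of_mem 0 (by simp)]
  · simp [SS_diag]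
  · intro p _ hp
    rw [zero_pow hp]
    simp

theorem stmt_14 (n : ℕ) (z : ℂ) :
    ∑ k ∈ Finset.range (n + 1),
      laguerre (-(2 * (k : ℂ)) - 1) k z *
        laguerre (-(2 * (n : ℂ)) + 2 * (k : ℂ) - 1) (n - k) (-z) = (-4 : ℂ) ^ n := by
  have step : ∀ k ∈ Finset.range (n+1),
      laguerre (-(2 * (k : ℂ)) - 1) k z *
        laguerre (-(2 * (n : ℂ)) + 2 * (k : ℂ) - 1) (n - k) (-z)
      = (-1:ℂ)^n * (gg k z * gg (n-k) (-z)) := by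
    intro k hk
    simp only [Finset.mem_range] at hk
    have hkn : k ≤ n := by omega
    have hα : -(2 * (n : ℂ)) + 2 * (k : ℂ) - 1 = -(2 * ((n - k : ℕ) : ℂ)) - 1 := by
      push_cast [Nat.cast_sub hkn]; ring
    rw [hα, lag_eq, lag_eq]
    have : ((-1:ℂ))^k * ((-1:ℂ))^(n-k) = (-1:ℂ)^n := by
      rw [← pow_add]; congr 1; omega
    calc (-1:ℂ)^k * gg k z * ((-1:ℂ)^(n-k) * gg (n-k) (-z))
        = ((-1:ℂ)^k * (-1:ℂ)^(n-k)) * (gg k z * gg (n-k) (-z)) := by ring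
      _ = (-1:ℂ)^n * (gg k z * gg (n-k) (-z)) := by rw [this]
  rw [Finset.sum_congr rfl step, ← Finset.mul_sum, main_sum]
  rw [show (-4:ℂ) = (-1) * 4 by ring, mul_pow]
end
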